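/- arXiv:2405.12567 — 3 statements merged into one kernel-verified Lean document; each statement's English description precedes it below -/
import Mathlib

section
/- Let N ≥ 1, r ∈ {1,…,N}, δ > 0, and let Z₁,…,Z_N be i.i.d. real random variables with cdf F_Z. Then P(F_Z(Z_(r:N)) ≥ r/(N+1) − sqrt(log(1/δ)/(2(N+2)))) ≥ 1 − δ. If moreover F_Z is continuous, then also P(F_Z(Z_(r:N)) ≤ r/(N+1) + sqrt(log(1/δ)/(2(N+2)))) ≥ 1 − δ. -/
open MeasureTheory ProbabilityTheory Set

/-- The `r`-th smallest value (order statistic, 1-indexed, ties with multiplicity)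
of a finite real vector. -/
noncomputable def orderStat {N : ℕ} (S : Fin N → ℝ) (r : ℕ) : ℝ :=
  ((Multiset.ofList (List.ofFn S)).sort (· ≤ ·)).getD (r - 1) 0

/-- Product of `N` i.i.d. uniform distributions on `[0,1]`. -/
noncomputable def unifPi (N : ℕ) : Measure (Fin N → ℝ) :=
  Measure.pi fun _ => volume.restrict (Icc (0:ℝ) 1)

/-- The Beta(r, N-r+1) distribution: the law of the `r`-th order statistic of
`N` i.i.d. uniform random variables on `[0,1]`. -/
noncomputable def betaOS (N r : ℕ) : Measure ℝ :=
  Measure.map (fun u => orderStat u r) (unifPi N)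

/-- The cdf of the Beta(r, N-r+1) distribution (cdf of `U_(r:N)`). -/
noncomputable def betaCDF (N r : ℕ) (t : ℝ) : ℝ := (betaOS N r (Iic t)).toReal

/-- Generalized inverse (quantile function) of a cdf. -/
noncomputable def genInv (F : ℝ → ℝ) (p : ℝ) : ℝ := sInf {x | p ≤ F x}

/-- Quantile function of the Beta(r, N-r+1) distribution. -/
noncomputable def betaQuantile (N r : ℕ) (p : ℝ) : ℝ := genInv (betaCDF N r) p

/-- Quantile-of-quantiles: the `k`-th smallest of the `m` within-group `ℓ`-th
order statistics of an `n × m` array. -/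
noncomputable def qqStat {n m : ℕ} (ℓ k : ℕ) (Z : Fin n → Fin m → ℝ) : ℝ :=
  orderStat (fun j => orderStat (fun i => Z i j) ℓ) k

/-- Product of `n × m` i.i.d. uniform distributions on `[0,1]`. -/
noncomputable def unifPi2 (n m : ℕ) : Measure (Fin n → Fin m → ℝ) :=
  Measure.pi fun _ => Measure.pi fun _ => volume.restrict (Icc (0:ℝ) 1)

/-- The law of `U_(ℓ:n, k:m)`, the `k`-th order statistic of the `m` within-group
`ℓ`-th order statistics of an `n × m` array of i.i.d. uniform variables
(equivalently, of `m` i.i.d. Beta(ℓ, n-ℓ+1) variables). -/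
noncomputable def betaBetaOS (n m ℓ k : ℕ) : Measure ℝ :=
  Measure.map (qqStat ℓ k) (unifPi2 n m)

/-- The auxiliary function `g(t) = sup_{δ ∈ (0, min{t,1-t})} (t-δ)/√(log(1/δ))`. -/
noncomputable def gFun (t : ℝ) : ℝ :=
  sSup ((fun δ => (t - δ) / Real.sqrt (Real.log (1/δ))) '' Ioo 0 (min t (1 - t)))

/-- The cdf of the Poisson-Binomial distribution with parameter vector `u`,
evaluated at the integer `r`. -/
noncomputable def pbCDF {m : ℕ} (u : Fin m → ℝ) (r : ℕ) : ℝ :=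
  ∑ A ∈ Finset.univ.powerset.filter (fun A : Finset (Fin m) => A.card ≤ r),
    (∏ j ∈ A, u j) * ∏ j ∈ Aᶜ, (1 - u j)

section OrderStatHelpers

/-- sorted list: k-th entry satisfies a downward-closed predicate iff more than k entries do. -/
lemma sorted_get_iff_countP {p : ℝ → Prop} [DecidablePred p]
    (hp : ∀ x y, x ≤ y → p y → p x) (l : List ℝ) :
    l.Pairwise (· ≤ ·) → ∀ (k : ℕ) (hk : k < l.length),
      (p (l.get ⟨k, hk⟩) ↔ k < l.countP (fun x => decide (p x))) := by
  induction l with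
  | nil => intro _ k hk; simp at hk
  | cons a t ih =>
    intro hl k hk
    rw [List.pairwise_cons] at hl
    have hcons : (a :: t).countP (fun x => decide (p x))
        = t.countP (fun x => decide (p x)) + if p a then 1 else 0 := by
      rw [List.countP_cons]; by_cases hpa : p a <;> simp [hpa]
    match k with
    | 0 =>
      show p a ↔ _
      rw [hcons]
      constructor
      · intro hpa; simp [hpa]
      · intro h
        by_contra hpa
        rw [if_neg hpa, add_zero] at h
        obtain ⟨x, hx, hpx⟩ := List.countP_pos_iff.mp h
        exact hpa (hp a x (hl.1 x hx) (by simpa using hpx))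
    | k + 1 =>
      have hk' : k < t.length := by simpa using Nat.lt_of_succ_lt_succ hk
      have IH := ih hl.2 k hk'
      show p (t.get ⟨k, hk'⟩) ↔ _
      rw [hcons]
      constructor
      · intro hmem
        have hpa : p a := hp a _ (hl.1 _ (List.get_mem t _)) hmem
        have h2 : k < t.countP (fun x => decide (p x)) := IH.mp hmem
        rw [if_pos hpa]; omega
      · intro h
        apply IH.mpr
        have : (if p a then 1 else 0) ≤ 1 := by split <;> omega
        omega

lemma orderStat_mem_count {N : ℕ} (S : Fin N → ℝ) {r : ℕ} (hr1 : 1 ≤ r) (hrN : r ≤ N)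
    {p : ℝ → Prop} [DecidablePred p] (hp : ∀ x y, x ≤ y → p y → p x) :
    p (orderStat S r) ↔ r ≤ (Finset.univ.filter (fun i => p (S i))).card := by
  classical
  set l := (Multiset.ofList (List.ofFn S)).sort (· ≤ ·) with hl
  have hlen : l.length = N := by rw [hl, Multiset.length_sort]; simp
  have hsorted : l.Pairwise (· ≤ ·) := Multiset.pairwise_sort _ _
  have hperm : l.Perm (List.ofFn S) := Multiset.coe_eq_coe.mp (Multiset.sort_eq _ _)
  have hk : r - 1 < l.length := by omega
  have hget : orderStat S r = l.get ⟨r - 1, hk⟩ := by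
    rw [orderStat, ← hl, List.getD_eq_getElem l 0 hk, List.get_eq_getElem]
  have hcount := sorted_get_iff_countP hp l hsorted (r-1) hk
  have hcl : l.countP (fun x => decide (p x)) = (List.ofFn S).countP (fun x => decide (p x)) :=
    hperm.countP_eq _
  have hcard : (List.ofFn S).countP (fun x => decide (p x))
      = (Finset.univ.filter (fun i => p (S i))).card := by
    rw [List.ofFn_eq_map]
    rw [← Multiset.coe_countP]
    rw [← Multiset.map_coe]
    rw [Multiset.countP_map]
    rw [Finset.card, Finset.filter_val, Fin.univ_def]
  rw [hget, hcount, hcl, hcard]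
  omega

lemma orderStat_mem_count_upper {N : ℕ} (S : Fin N → ℝ) {r : ℕ} (hr1 : 1 ≤ r) (hrN : r ≤ N)
    {p : ℝ → Prop} [DecidablePred p] (hp : ∀ x y, x ≤ y → p x → p y) :
    p (orderStat S r) ↔ N - r + 1 ≤ (Finset.univ.filter (fun i => p (S i))).card := by
  classical
  have hlow := orderStat_mem_count S hr1 hrN (p := fun z => ¬ p z)
      (fun x y hxy hy hx => hy (hp x y hxy hx))
  have hcard : (Finset.univ.filter (fun i => p (S i))).card
      + (Finset.univ.filter (fun i => ¬ p (S i))).card = N := by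
    rw [Finset.card_filter_add_card_filter_not]
    simp
  have h2 : p (orderStat S r) ↔ ¬ (r ≤ (Finset.univ.filter (fun i => ¬ p (S i))).card) := by
    rw [← hlow]; exact not_not.symm
  rw [h2]
  omega


lemma lowerSet_subset_Iio {s : Set ℝ} (hs : IsLowerSet s) (h : s.Nonempty) (hb : BddAbove s) :
    Iio (sSup s) ⊆ s := fun x hx => by
  obtain ⟨y, hy, hxy⟩ := exists_lt_of_lt_csSup h hx
  exact hs hxy.le hy

lemma lowerSet_measurable {s : Set ℝ} (hs : IsLowerSet s) : MeasurableSet s := by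
  rcases eq_empty_or_nonempty s with h | h
  · simp [h]
  by_cases hb : BddAbove s
  · by_cases hc : sSup s ∈ s
    · have : s = Iic (sSup s) :=
        subset_antisymm (fun x hx => le_csSup hb hx) (fun x hx => hs hx hc)
      rw [this]; exact measurableSet_Iic
    · have : s = Iio (sSup s) := subset_antisymm
        (fun x hx => lt_of_le_of_ne (le_csSup hb hx) (fun h' => hc (h' ▸ hx)))
        (lowerSet_subset_Iio hs h hb)
      rw [this]; exact measurableSet_Iio
  · have : s = univ := eq_univ_of_forall fun x => by
      obtain ⟨y, hy, hxy⟩ := not_bddAbove_iff.mp hb x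
      exact hs hxy.le hy
    rw [this]; exact MeasurableSet.univ

lemma lowerSet_measure_le (ν : Measure ℝ) {s : Set ℝ} (hs : IsLowerSet s)
    (B : ENNReal) (hB : ∀ z ∈ s, ν (Iic z) ≤ B) : ν s ≤ B := by
  rcases eq_empty_or_nonempty s with h | h
  · simp [h]
  by_cases hb : BddAbove s
  · by_cases hc : sSup s ∈ s
    · exact le_trans (measure_mono (fun x hx => le_csSup hb hx)) (hB _ hc)
    · have hse : s = Iio (sSup s) := subset_antisymm
        (fun x hx => lt_of_le_of_ne (le_csSup hb hx) (fun h' => hc (h' ▸ hx)))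
        (lowerSet_subset_Iio hs h hb)
      set c := sSup s with hcdef
      have hU : Iio c = ⋃ n : ℕ, Iic (c - 1/(n+1)) := by
        ext x
        simp only [mem_Iio, mem_iUnion, mem_Iic]
        constructor
        · intro hx
          obtain ⟨n, hn⟩ := exists_nat_one_div_lt (sub_pos.mpr hx)
          exact ⟨n, by push_cast at hn ⊢; linarith⟩
        · rintro ⟨n, hn⟩
          have h1 : (0:ℝ) < 1/((n:ℝ)+1) := by positivity
          linarith
      have hmono : Monotone (fun n : ℕ => Iic (c - 1/((n:ℝ)+1))) := by
        intro m n hmn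
        apply Iic_subset_Iic.mpr
        have h2 : (1:ℝ)/((n:ℝ)+1) ≤ 1/((m:ℝ)+1) := by
          apply one_div_le_one_div_of_le (by positivity)
          exact_mod_cast Nat.succ_le_succ hmn
        linarith
      rw [hse, hU]
      refine le_of_tendsto (tendsto_measure_iUnion_atTop hmono) ?_
      filter_upwards with n
      apply hB
      rw [hse]
      have h1 : (0:ℝ) < 1/((n:ℝ)+1) := by positivity
      simp only [mem_Iio]
      linarith
  · have hse : s = univ := eq_univ_of_forall fun x => by
      obtain ⟨y, hy, hxy⟩ := not_bddAbove_iff.mp hb x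
      exact hs hxy.le hy
    rw [hse]
    refine le_of_tendsto (tendsto_measure_Iic_atTop ν) ?_
    filter_upwards with x
    exact hB x (hse ▸ mem_univ x)


lemma bernoulli_mgf_le {p : ℝ} (hp0 : 0 ≤ p) (hp1 : p ≤ 1) (x : ℝ) :
    1 + p * (Real.exp x - 1) ≤ Real.exp (x * p + x ^ 2 / 8) := by
  set D : ℝ → ℝ := fun u => 1 + p * (Real.exp u - 1) with hD
  have hDpos : ∀ u, 0 < D u := by
    intro u
    rcases eq_or_lt_of_le hp0 with h | h
    · simp [hD, ← h]
    · have h1 : 0 < p * Real.exp u := mul_pos h (Real.exp_pos u)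
      simp only [hD]; nlinarith
  have hq_le : ∀ u, p * Real.exp u ≤ D u := by
    intro u
    simp only [hD]
    nlinarith [Real.exp_pos u]
  have hDderiv : ∀ u, HasDerivAt D (p * Real.exp u) u := by
    intro u
    have := (((Real.hasDerivAt_exp u).sub_const 1).const_mul p).const_add 1
    simpa [hD] using this
  set h : ℝ → ℝ := fun u => u * p + u ^ 2 / 8 - Real.log (D u) with hh
  set h' : ℝ → ℝ := fun u => p + u / 4 - p * Real.exp u / D u with hh'
  have hderiv : ∀ u, HasDerivAt h (h' u) u := by
    intro u
    have h1 := ((hasDerivAt_id u).mul_const p).add ((hasDerivAt_pow 2 u).div_const 8)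
    have h2 : HasDerivAt (fun u => Real.log (D u)) (p * Real.exp u / D u) u :=
      (hDderiv u).log (hDpos u).ne'
    have h3 := h1.sub h2
    refine h3.congr_deriv ?_
    simp only [hh']; push_cast; ring
  have hderiv' : ∀ u, HasDerivAt h'
      (1/4 - (p * Real.exp u * D u - p * Real.exp u * (p * Real.exp u)) / (D u) ^ 2) u := by
    intro u
    have h1 : HasDerivAt (fun u : ℝ => p + u / 4) (1/4) u := by
      simpa using ((hasDerivAt_id u).div_const 4).const_add p
    have h2 : HasDerivAt (fun u => p * Real.exp u / D u)
        ((p * Real.exp u * D u - p * Real.exp u * (p * Real.exp u)) / (D u) ^ 2) u :=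
      ((Real.hasDerivAt_exp u).const_mul p).div (hDderiv u) (hDpos u).ne'
    exact h1.sub h2
  have hsec : ∀ u, 0 ≤ 1/4 - (p * Real.exp u * D u - p * Real.exp u * (p * Real.exp u)) / (D u) ^ 2 := by
    intro u
    rw [sub_nonneg, div_le_iff₀ (pow_pos (hDpos u) 2)]
    nlinarith [sq_nonneg (D u / 2 - p * Real.exp u)]
  have hmono : Monotone h' := by
    apply monotone_of_deriv_nonneg
    · exact fun u => (hderiv' u).differentiableAt
    · intro u; rw [(hderiv' u).deriv]; exact hsec u
  have h'0 : h' 0 = 0 := by simp [hh', hD]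
  have hd : Differentiable ℝ h := fun u => (hderiv u).differentiableAt
  have h0 : h 0 = 0 := by simp [hh, hD]
  have key : 0 ≤ h x := by
    rcases le_total 0 x with hx | hx
    · have hmOn : MonotoneOn h (Set.Ici 0) := by
        apply monotoneOn_of_deriv_nonneg (convex_Ici 0) hd.continuous.continuousOn
          hd.differentiableOn
        intro u hu
        have hu' : (0:ℝ) < u := by simpa [interior_Ici] using hu
        rw [(hderiv u).deriv, ← h'0]
        exact hmono hu'.le
      have := hmOn Set.self_mem_Ici (show x ∈ Set.Ici 0 from hx) hx
      linarith
    · have haOn : AntitoneOn h (Set.Iic 0) := by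
        apply antitoneOn_of_deriv_nonpos (convex_Iic 0) hd.continuous.continuousOn
          hd.differentiableOn
        intro u hu
        have hu' : u < (0:ℝ) := by simpa [interior_Iic] using hu
        rw [(hderiv u).deriv, ← h'0]
        exact hmono hu'.le
      have := haOn (show x ∈ Set.Iic 0 from hx) Set.self_mem_Iic hx
      linarith
  have hlog : Real.log (D x) ≤ x * p + x ^ 2 / 8 := by
    simp only [hh] at key; linarith
  calc D x = Real.exp (Real.log (D x)) := (Real.exp_log (hDpos x)).symm
    _ ≤ _ := Real.exp_le_exp.mpr hlog

lemma indicator_sum_tail {Ω : Type*} [MeasurableSpace Ω] (μ : Measure Ω)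
    [IsProbabilityMeasure μ] {N : ℕ} (hN : 0 < N) (Z : Fin N → Ω → ℝ)
    (hZmeas : ∀ i, Measurable (Z i))
    (hZindep : iIndepFun Z μ)
    {s : Set ℝ} (hsm : MeasurableSet s) {p a : ℝ} (hp0 : 0 ≤ p) (hp1 : p ≤ 1)
    (hpi : ∀ i, (μ (Z i ⁻¹' s)).toReal ≤ p) (hap : (N : ℝ) * p ≤ a) :
    μ {ω | a ≤ ∑ i, s.indicator (fun _ => (1:ℝ)) (Z i ω)}
      ≤ ENNReal.ofReal (Real.exp (-2 * (a - N * p) ^ 2 / N)) := by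
  classical
  set X : Fin N → Ω → ℝ := fun i ω => s.indicator (fun _ => (1:ℝ)) (Z i ω) with hX
  have hXmeas : ∀ i, Measurable (X i) := fun i =>
    (measurable_const.indicator hsm).comp (hZmeas i)
  have hX01 : ∀ i ω, 0 ≤ X i ω ∧ X i ω ≤ 1 := by
    intro i ω
    simp only [hX, Set.indicator]
    split <;> norm_num
  set b := a - N * p with hb
  have hb0 : 0 ≤ b := by rw [hb]; linarith
  set t := 4 * b / N with ht
  have hNpos : (0:ℝ) < N := by exact_mod_cast hN
  have ht0 : 0 ≤ t := by positivity
  have hSmeas : Measurable (fun ω => ∑ i, X i ω) :=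
    Finset.measurable_sum _ (fun i _ => hXmeas i)
  have hsumN : ∀ ω, ∑ i, X i ω ≤ N := by
    intro ω
    calc ∑ i, X i ω ≤ ∑ _i : Fin N, (1:ℝ) := Finset.sum_le_sum (fun i _ => (hX01 i ω).2)
      _ = N := by simp
  have hint : Integrable (fun ω => Real.exp (t * ∑ i, X i ω)) μ := by
    apply Integrable.mono' (integrable_const (Real.exp (t * N)))
    · exact ((hSmeas.const_mul t).exp).aestronglyMeasurable
    · filter_upwards with ω
      rw [Real.norm_eq_abs, abs_of_pos (Real.exp_pos _)]
      exact Real.exp_le_exp.mpr (mul_le_mul_of_nonneg_left (hsumN ω) ht0)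
  have hchern := measure_ge_le_exp_mul_mgf (μ := μ) (X := fun ω => ∑ i, X i ω) a ht0 hint
  have hindep' : iIndepFun X μ :=
    hZindep.comp (fun _ => s.indicator (fun _ => (1:ℝ)))
      (fun _ => measurable_const.indicator hsm)
  have hmgf_sum : mgf (fun ω => ∑ i, X i ω) μ t = ∏ i, mgf (X i) μ t := by
    have h1 := hindep'.mgf_sum (t := t) hXmeas Finset.univ
    have h2 : (fun ω => ∑ i, X i ω) = ∑ i, X i := by
      funext ω; simp [Finset.sum_apply]
    rw [h2, h1]
  have hmgf_i : ∀ i, mgf (X i) μ t = 1 + (Real.exp t - 1) * (μ (Z i ⁻¹' s)).toReal := by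
    intro i
    have hfe : (fun ω => Real.exp (t * X i ω))
        = fun ω => (Z i ⁻¹' s).indicator (fun _ => Real.exp t - 1) ω + 1 := by
      funext ω
      by_cases hω : Z i ω ∈ s
      · have h1 : X i ω = 1 := by simp [hX, Set.indicator_of_mem hω]
        have h2 : ω ∈ Z i ⁻¹' s := hω
        rw [h1, Set.indicator_of_mem h2]
        simp
      · have h1 : X i ω = 0 := by simp [hX, Set.indicator_of_notMem hω]
        have h2 : ω ∉ Z i ⁻¹' s := hω
        rw [h1, Set.indicator_of_notMem h2]
        simp
    rw [mgf, hfe, integral_add ((integrable_const _).indicator ((hZmeas i) hsm))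
        (integrable_const 1)]
    rw [integral_indicator_const _ ((hZmeas i) hsm), integral_const]
    simp [measure_univ]; rw [measureReal_def]; ring
  have hmgf_le : ∀ i, mgf (X i) μ t ≤ 1 + p * (Real.exp t - 1) := by
    intro i
    rw [hmgf_i i]
    have h1 : (1:ℝ) ≤ Real.exp t := Real.one_le_exp ht0
    have h2 := hpi i
    nlinarith [ENNReal.toReal_nonneg (a := μ (Z i ⁻¹' s))]
  have hprod : mgf (fun ω => ∑ i, X i ω) μ t ≤ (1 + p * (Real.exp t - 1)) ^ N := by
    rw [hmgf_sum]
    calc ∏ i, mgf (X i) μ t ≤ ∏ _i : Fin N, (1 + p * (Real.exp t - 1)) :=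
          Finset.prod_le_prod (fun i _ => mgf_nonneg) (fun i _ => hmgf_le i)
      _ = _ := by simp
  have hhoef : (1 + p * (Real.exp t - 1)) ^ N ≤ Real.exp ((N : ℝ) * (t * p + t ^ 2 / 8)) := by
    rw [Real.exp_nat_mul]
    apply pow_le_pow_left₀ _ (bernoulli_mgf_le hp0 hp1 t) N
    have h1 : (1:ℝ) ≤ Real.exp t := Real.one_le_exp ht0
    nlinarith
  have hexp_eq : Real.exp (-t * a) * Real.exp ((N : ℝ) * (t * p + t ^ 2 / 8))
      = Real.exp (-2 * b ^ 2 / N) := by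
    rw [← Real.exp_add]
    congr 1
    have hNne : (N:ℝ) ≠ 0 := hNpos.ne'
    have hae : a = b + N * p := by rw [hb]; ring
    rw [hae, ht]
    field_simp
    ring
  have hfin : (μ {ω | a ≤ ∑ i, X i ω}).toReal ≤ Real.exp (-2 * b ^ 2 / N) := by
    calc (μ {ω | a ≤ ∑ i, X i ω}).toReal
        ≤ Real.exp (-t * a) * mgf (fun ω => ∑ i, X i ω) μ t := hchern
      _ ≤ Real.exp (-t * a) * Real.exp ((N : ℝ) * (t * p + t ^ 2 / 8)) := by
          apply mul_le_mul_of_nonneg_left (le_trans hprod hhoef) (Real.exp_pos _).le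
      _ = _ := hexp_eq
  have := ENNReal.ofReal_le_ofReal hfin
  rwa [ENNReal.ofReal_toReal (measure_ne_top μ _)] at this

end OrderStatHelpers

set_option maxHeartbeats 1000000 in
/-- For `Z₁,…,Z_N` i.i.d. with cdf `F`,
`P(F(Z_(r:N)) ≥ r/(N+1) - √(log(1/δ)/(2(N+2)))) ≥ 1-δ`, and if `F` is continuous also
`P(F(Z_(r:N)) ≤ r/(N+1) + √(log(1/δ)/(2(N+2)))) ≥ 1-δ`. -/
theorem orderStat_cdf_concentration {Ω : Type*} [MeasurableSpace Ω]
    (μ : Measure Ω) [IsProbabilityMeasure μ]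
    {N : ℕ} (r : ℕ) (hr1 : 1 ≤ r) (hrN : r ≤ N) (δ : ℝ) (hδ : 0 < δ)
    (Z : Fin N → Ω → ℝ) (ν : Measure ℝ)
    (hZmeas : ∀ i, Measurable (Z i))
    (hZindep : iIndepFun Z μ)
    (hZlaw : ∀ i, Measure.map (Z i) μ = ν)
    (F : ℝ → ℝ) (hF : F = fun x => (ν (Iic x)).toReal) :
    ENNReal.ofReal (1 - δ)
      ≤ μ {ω | (r : ℝ) / (N + 1) - Real.sqrt (Real.log (1/δ) / (2 * ((N : ℝ) + 2)))
            ≤ F (orderStat (fun i => Z i ω) r)}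
    ∧ (Continuous F →
        ENNReal.ofReal (1 - δ)
          ≤ μ {ω | F (orderStat (fun i => Z i ω) r)
              ≤ (r : ℝ) / (N + 1) + Real.sqrt (Real.log (1/δ) / (2 * ((N : ℝ) + 2)))}) := by
  
  classical
  have hN : 0 < N := lt_of_lt_of_le hr1 hrN
  have hNpos : (0:ℝ) < N := by exact_mod_cast hN
  have hN1 : (0:ℝ) < (N:ℝ) + 1 := by positivity
  set ε := Real.sqrt (Real.log (1/δ) / (2 * ((N : ℝ) + 2))) with hεdef
  have hε0 : 0 ≤ ε := Real.sqrt_nonneg _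
  have hrR : (1:ℝ) ≤ (r:ℝ) := by exact_mod_cast hr1
  have hrNR : (r:ℝ) ≤ (N:ℝ) := by exact_mod_cast hrN
  haveI hν : IsProbabilityMeasure ν := by
    rw [← hZlaw ⟨0, hN⟩]
    exact Measure.isProbabilityMeasure_map (hZmeas _).aemeasurable
  have hFmono : Monotone F := by
    intro x y hxy
    rw [hF]
    exact ENNReal.toReal_mono (measure_ne_top ν _) (measure_mono (Iic_subset_Iic.mpr hxy))
  have hF0 : ∀ z, 0 ≤ F z := fun z => by rw [hF]; exact ENNReal.toReal_nonneg
  have hF1 : ∀ z, F z ≤ 1 := fun z => by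
    rw [hF]
    exact ENNReal.toReal_le_of_le_ofReal zero_le_one (by simpa using prob_le_one (μ := ν) (s := Iic z))
  have hIic : ∀ z, ν (Iic z) = ENNReal.ofReal (F z) := fun z => by
    rw [hF]; exact (ENNReal.ofReal_toReal (measure_ne_top ν _)).symm
  by_cases hδ1 : 1 ≤ δ
  case pos =>
    have h0 : ENNReal.ofReal (1 - δ) = 0 := by
      rw [ENNReal.ofReal_eq_zero]; linarith
    rw [h0]
    exact ⟨zero_le, fun _ => zero_le⟩
  push_neg at hδ1
  have hLpos : 0 < Real.log (1/δ) := Real.log_pos (by rw [lt_div_iff₀ hδ]; linarith)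
  have hε2 : ε ^ 2 = Real.log (1/δ) / (2 * ((N:ℝ) + 2)) := Real.sq_sqrt (by positivity)
  have hεpos : 0 < ε := Real.sqrt_pos.mpr (by positivity)
  clear_value ε
  have hnum : ∀ b : ℝ, ((N:ℝ) + 1) * ε ≤ b → Real.exp (-2 * b ^ 2 / N) ≤ δ := by
    intro b hbb
    have hb0 : 0 ≤ b := le_trans (by positivity) hbb
    have hsq : ((N:ℝ)+1)*ε * (((N:ℝ)+1)*ε) ≤ b * b := mul_le_mul hbb hbb (by positivity) hb0
    have h1 : (N:ℝ) * ((N:ℝ) + 2) * ε ^ 2 ≤ b ^ 2 := by nlinarith [hsq, sq_nonneg ε]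
    have hLe : Real.log (1/δ) = 2 * ((N:ℝ)+2) * ε ^ 2 := by
      rw [hε2]; field_simp
    have h3 : -2 * b ^ 2 / N ≤ - Real.log (1/δ) := by
      rw [div_le_iff₀ hNpos, hLe]; nlinarith
    calc Real.exp (-2 * b ^ 2 / N) ≤ Real.exp (-Real.log (1/δ)) := Real.exp_le_exp.mpr h3
      _ = δ := by rw [Real.exp_neg, Real.exp_log (by positivity), one_div, inv_inv]
  have hconc : ∀ E : Set Ω, MeasurableSet E → μ E ≤ ENNReal.ofReal δ →
      ENNReal.ofReal (1 - δ) ≤ μ Eᶜ := by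
    intro E hEmeas hEle
    rw [measure_compl hEmeas (measure_ne_top μ E), measure_univ]
    calc ENNReal.ofReal (1 - δ) = 1 - ENNReal.ofReal δ := by
          rw [ENNReal.ofReal_sub 1 hδ.le, ENNReal.ofReal_one]
      _ ≤ 1 - μ E := tsub_le_tsub_left hEle 1
  constructor
  · -- lower tail
    set τ := (r:ℝ)/((N:ℝ)+1) - ε with hτdef
    by_cases hτpos : 0 < τ
    case neg =>
      have huniv : {ω | τ ≤ F (orderStat (fun i => Z i ω) r)} = univ :=
        eq_univ_of_forall fun ω => le_trans (not_lt.mp hτpos) (hF0 _)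
      rw [huniv, measure_univ]
      exact le_trans (ENNReal.ofReal_le_ofReal (by linarith)) (le_of_eq ENNReal.ofReal_one)
    case pos =>
      set s : Set ℝ := {z | F z < τ} with hsdef
      have hslower : IsLowerSet s := fun x y hxy hy => lt_of_le_of_lt (hFmono hxy) hy
      have hsm : MeasurableSet s := lowerSet_measurable hslower
      have hνs : ν s ≤ ENNReal.ofReal τ :=
        lowerSet_measure_le ν hslower _ (fun z hz => by
          rw [hIic]
          exact ENNReal.ofReal_le_ofReal (le_of_lt hz))
      set p := (ν s).toReal with hpdef
      have hp0 : 0 ≤ p := ENNReal.toReal_nonneg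
      have hp1 : p ≤ 1 :=
        ENNReal.toReal_le_of_le_ofReal zero_le_one (by simpa using prob_le_one (μ := ν) (s := s))
      have hpτ : p ≤ τ := ENNReal.toReal_le_of_le_ofReal hτpos.le hνs
      clear_value p
      have hpre : ∀ i, μ (Z i ⁻¹' s) = ν s := fun i => by
        rw [← hZlaw i, Measure.map_apply (hZmeas i) hsm]
      have hsum : ∀ ω, ∑ i, s.indicator (fun _ => (1:ℝ)) (Z i ω)
          = ((Finset.univ.filter (fun i => Z i ω ∈ s)).card : ℝ) := by
        intro ω
        rw [← Finset.sum_boole]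
        exact Finset.sum_congr rfl (fun i _ => by
          by_cases h : Z i ω ∈ s <;> simp [Set.indicator, h])
      have hEm : MeasurableSet {ω | (r:ℝ) ≤ ∑ i, s.indicator (fun _ => (1:ℝ)) (Z i ω)} :=
        measurableSet_le measurable_const
          (Finset.measurable_sum _ (fun i _ => (measurable_const.indicator hsm).comp (hZmeas i)))
      have hseteq : {ω | τ ≤ F (orderStat (fun i => Z i ω) r)}
          = {ω | (r:ℝ) ≤ ∑ i, s.indicator (fun _ => (1:ℝ)) (Z i ω)}ᶜ := by
        ext ω
        simp only [Set.mem_setOf_eq, Set.mem_compl_iff]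
        rw [hsum ω, Nat.cast_le]
        rw [← orderStat_mem_count (fun i => Z i ω) hr1 hrN
            (p := fun z => z ∈ s) (fun x y hxy hy => hslower hxy hy)]
        show τ ≤ F (orderStat (fun i => Z i ω) r) ↔ ¬ (F (orderStat (fun i => Z i ω) r) < τ)
        exact not_lt.symm
      rw [hseteq]
      apply hconc _ hEm
      have hττ : τ ≤ (r:ℝ)/((N:ℝ)+1) := by rw [hτdef]; linarith
      have hap : (N:ℝ) * p ≤ (r:ℝ) := by
        calc (N:ℝ) * p ≤ (N:ℝ) * τ := mul_le_mul_of_nonneg_left hpτ hNpos.le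
          _ ≤ (N:ℝ) * ((r:ℝ)/((N:ℝ)+1)) := mul_le_mul_of_nonneg_left hττ hNpos.le
          _ ≤ (r:ℝ) := by
              rw [mul_comm, div_mul_eq_mul_div, div_le_iff₀ hN1]
              nlinarith
      have htail := indicator_sum_tail μ hN Z hZmeas hZindep hsm hp0 hp1
          (fun i => le_of_eq (by rw [hpre i]; exact hpdef.symm)) hap
      refine le_trans htail (ENNReal.ofReal_le_ofReal ?_)
      apply hnum
      have h1 : (N:ℝ) * p ≤ (N:ℝ) * τ := mul_le_mul_of_nonneg_left hpτ hNpos.le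
      have hid : (r:ℝ) - (N:ℝ)*τ = (r:ℝ)/((N:ℝ)+1) + (N:ℝ)*ε := by
        rw [hτdef]; field_simp; ring
      have hετ : ε ≤ (r:ℝ)/((N:ℝ)+1) := by
        rw [hτdef] at hτpos; linarith
      calc ((N:ℝ)+1)*ε = ε + (N:ℝ)*ε := by ring
        _ ≤ (r:ℝ)/((N:ℝ)+1) + (N:ℝ)*ε := add_le_add_left hετ _
        _ = (r:ℝ) - (N:ℝ)*τ := hid.symm
        _ ≤ (r:ℝ) - (N:ℝ)*p := sub_le_sub_left h1 _
  · -- upper tail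
    intro hFc
    set τ := (r:ℝ)/((N:ℝ)+1) + ε with hτdef
    by_cases hτ1 : τ < 1
    case neg =>
      have huniv : {ω | F (orderStat (fun i => Z i ω) r) ≤ τ} = univ :=
        eq_univ_of_forall fun ω => le_trans (hF1 _) (not_lt.mp hτ1)
      rw [huniv, measure_univ]
      exact le_trans (ENNReal.ofReal_le_ofReal (by linarith)) (le_of_eq ENNReal.ofReal_one)
    case pos =>
      have hρpos : (0:ℝ) < (r:ℝ)/((N:ℝ)+1) := div_pos (by linarith) hN1
      have hτ0 : 0 < τ := by rw [hτdef]; linarith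
      set U : Set ℝ := {z | τ < F z} with hUdef
      have hUclower : IsLowerSet Uᶜ := by
        intro x y hxy hy
        simp only [Set.mem_compl_iff, hUdef, Set.mem_setOf_eq, not_lt] at hy ⊢
        exact le_trans (hFmono hxy) hy
      have hUm : MeasurableSet U := by
        rw [← compl_compl U]; exact (lowerSet_measurable hUclower).compl
      have htop : Filter.Tendsto F Filter.atTop (nhds 1) := by
        have h1 := tendsto_measure_Iic_atTop (μ := ν)
        have h2 := (ENNReal.tendsto_toReal (measure_ne_top ν Set.univ)).comp h1
        rw [hF]
        simp only [measure_univ, ENNReal.toReal_one] at h2; exact h2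
      obtain ⟨zb, hzb⟩ : ∃ zb, τ ≤ F zb :=
        (Filter.Tendsto.eventually_const_le hτ1 htop).exists
      obtain ⟨za', hza'⟩ : ∃ za, F za ≤ τ := by
        have hanti : Antitone (fun n : ℕ => Iic (-(n:ℝ))) := by
          intro a b hab
          apply Iic_subset_Iic.mpr
          simp only [neg_le_neg_iff]
          exact_mod_cast hab
        have hiInter : (⋂ n : ℕ, Iic (-(n:ℝ))) = ∅ := by
          ext x
          simp only [mem_iInter, mem_Iic, mem_empty_iff_false, iff_false, not_forall, not_le]
          obtain ⟨n, hn⟩ := exists_nat_gt (-x)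
          exact ⟨n, by linarith⟩
        have h3 := tendsto_measure_iInter_atTop (μ := ν)
            (fun n => measurableSet_Iic.nullMeasurableSet) hanti ⟨0, measure_ne_top ν _⟩
        rw [hiInter, measure_empty] at h3
        have h4 := (h3.eventually_lt_const (ENNReal.ofReal_pos.mpr hτ0)).exists
        obtain ⟨n, hn⟩ := h4
        refine ⟨-(n:ℝ), ?_⟩
        rw [hF]
        exact le_of_lt (ENNReal.toReal_lt_of_lt_ofReal hn)
      have hza : F (min za' zb) ≤ τ := le_trans (hFmono (min_le_left _ _)) hza'
      have hab : min za' zb ≤ zb := min_le_right _ _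
      obtain ⟨z₀, _, hz₀⟩ := intermediate_value_Icc hab hFc.continuousOn
          (show τ ∈ Icc (F (min za' zb)) (F zb) from ⟨hza, hzb⟩)
      have hνU : ν U ≤ ENNReal.ofReal (1 - τ) := by
        have h1 : ENNReal.ofReal τ ≤ ν Uᶜ := by
          have hsub : Iic z₀ ⊆ Uᶜ := by
            intro z hz
            simp only [Set.mem_compl_iff, hUdef, Set.mem_setOf_eq, not_lt]
            exact hz₀ ▸ hFmono hz
          calc ENNReal.ofReal τ = ν (Iic z₀) := by rw [hIic, hz₀]
            _ ≤ ν Uᶜ := measure_mono hsub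
        have h2 : ν U = 1 - ν Uᶜ := by
          have h5 := measure_compl (μ := ν) (lowerSet_measurable hUclower) (measure_ne_top ν _)
          rw [compl_compl, measure_univ] at h5
          exact h5
        rw [h2, ENNReal.ofReal_sub 1 hτ0.le, ENNReal.ofReal_one]
        exact tsub_le_tsub_left h1 1
      set q := (ν U).toReal with hqdef
      have hq0 : 0 ≤ q := ENNReal.toReal_nonneg
      have hq1' : q ≤ 1 - τ := ENNReal.toReal_le_of_le_ofReal (by linarith) hνU
      have hq1 : q ≤ 1 := by linarith
      clear_value q
      have hpre : ∀ i, μ (Z i ⁻¹' U) = ν U := fun i => by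
        rw [← hZlaw i, Measure.map_apply (hZmeas i) hUm]
      have hmcast : (((N - r + 1 : ℕ)):ℝ) = (N:ℝ) - r + 1 := by
        push_cast [Nat.cast_sub hrN]; ring
      have hsum : ∀ ω, ∑ i, U.indicator (fun _ => (1:ℝ)) (Z i ω)
          = ((Finset.univ.filter (fun i => Z i ω ∈ U)).card : ℝ) := by
        intro ω
        rw [← Finset.sum_boole]
        exact Finset.sum_congr rfl (fun i _ => by
          by_cases h : Z i ω ∈ U <;> simp [Set.indicator, h])
      have hEm : MeasurableSet {ω | (((N - r + 1 : ℕ)):ℝ) ≤ ∑ i, U.indicator (fun _ => (1:ℝ)) (Z i ω)} :=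
        measurableSet_le measurable_const
          (Finset.measurable_sum _ (fun i _ => (measurable_const.indicator hUm).comp (hZmeas i)))
      have hseteq : {ω | F (orderStat (fun i => Z i ω) r) ≤ τ}
          = {ω | (((N - r + 1 : ℕ)):ℝ) ≤ ∑ i, U.indicator (fun _ => (1:ℝ)) (Z i ω)}ᶜ := by
        ext ω
        simp only [Set.mem_setOf_eq, Set.mem_compl_iff]
        rw [hsum ω, Nat.cast_le]
        rw [← orderStat_mem_count_upper (fun i => Z i ω) hr1 hrN
            (p := fun z => z ∈ U) (fun x y hxy hx => lt_of_lt_of_le hx (hFmono hxy))]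
        show F (orderStat (fun i => Z i ω) r) ≤ τ ↔ ¬ (τ < F (orderStat (fun i => Z i ω) r))
        exact not_lt.symm
      rw [hseteq]
      apply hconc _ hEm
      have hρid : ((r:ℝ)/((N:ℝ)+1)) * ((N:ℝ)+1) = r := by field_simp
      have hρ1 : (r:ℝ)/((N:ℝ)+1) ≤ 1 := by rw [div_le_one hN1]; linarith
      have hNρ : (r:ℝ) - 1 ≤ (N:ℝ)*((r:ℝ)/((N:ℝ)+1)) := by nlinarith [hρid, hρ1]
      have hNε : (0:ℝ) ≤ (N:ℝ) * ε := by positivity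
      have h1τ : (N:ℝ) * (1 - τ) = (N:ℝ) - (N:ℝ)*((r:ℝ)/((N:ℝ)+1)) - (N:ℝ)*ε := by
        rw [hτdef]; ring
      have hap : (N:ℝ) * q ≤ (((N - r + 1 : ℕ)):ℝ) := by
        rw [hmcast]
        have h1 : (N:ℝ) * q ≤ (N:ℝ) * (1 - τ) := mul_le_mul_of_nonneg_left hq1' hNpos.le
        rw [h1τ] at h1
        linarith
      have htail := indicator_sum_tail μ hN Z hZmeas hZindep hUm hq0 hq1
          (fun i => le_of_eq (by rw [hpre i]; exact hqdef.symm)) hap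
      refine le_trans htail (ENNReal.ofReal_le_ofReal ?_)
      apply hnum
      rw [hmcast]
      have h1 : (N:ℝ) * q ≤ (N:ℝ) * (1 - τ) := mul_le_mul_of_nonneg_left hq1' hNpos.le
      rw [h1τ] at h1
      have hε1ρ : ε ≤ 1 - (r:ℝ)/((N:ℝ)+1) := by
        rw [hτdef] at hτ1; linarith
      have hρr : (r:ℝ) = (N:ℝ)*((r:ℝ)/((N:ℝ)+1)) + (r:ℝ)/((N:ℝ)+1) := by
        field_simp
      linarith
end

section
/- In the one-shot federated setting with m agents each holding n i.i.d. calibration scores, for any (ℓ,k) ∈ {1,…,n}×{1,…,m} and β ∈ (0,1), the conditional coverage 1 − α_{ℓ,k}(D) := P(Y ∈ Ĉ_{ℓ,k}(X) | D) satisfies P(1 − α_{ℓ,k}(D) ≥ F_{U_(ℓ:n)}⁻¹(F_{U_(k:m)}⁻¹(β))) ≥ 1 − β, with equality when the scores are almost surely distinct. -/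
open MeasureTheory ProbabilityTheory Set

open scoped Classical

lemma countP_eq_card_filter_fin {N : ℕ} (S : Fin N → ℝ) (p : ℝ → Prop) [DecidablePred p] :
    Multiset.countP p (Multiset.ofList (List.ofFn S)) = (Finset.univ.filter fun i => p (S i)).card := by
  rw [List.ofFn_eq_map]
  have : (Multiset.ofList ((List.finRange N).map S)) = Multiset.map S (Finset.univ.val) := by
    simp [Fin.univ_def]
  rw [this, Multiset.countP_map]
  rfl

lemma orderStat_iff {N : ℕ} (S : Fin N → ℝ) {r : ℕ} (hr1 : 1 ≤ r) (hrN : r ≤ N)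
    (p : ℝ → Prop) [DecidablePred p] (hp : ∀ ⦃a b : ℝ⦄, a ≤ b → p b → p a) :
    p (orderStat S r) ↔ r ≤ (Finset.univ.filter fun i => p (S i)).card := by
  classical
  set l := ((Multiset.ofList (List.ofFn S)).sort (· ≤ ·)) with hl
  have hlen : l.length = N := by
    simp [hl, Multiset.length_sort]
  have hsort : l.Pairwise (· ≤ ·) := Multiset.pairwise_sort _ _
  have hi : r - 1 < l.length := by omega
  have hos : orderStat S r = l.get ⟨r - 1, hi⟩ := by
    rw [orderStat, ← hl, List.getD_eq_get (i := ⟨r - 1, hi⟩)]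
  have hcnt : (Finset.univ.filter fun i => p (S i)).card
      = (Finset.univ.filter fun j : Fin l.length => p (l.get j)).card := by
    rw [← countP_eq_card_filter_fin S p, ← countP_eq_card_filter_fin l.get p]
    have : Multiset.ofList (List.ofFn l.get) = Multiset.ofList l := by rw [List.ofFn_get]
    rw [this, ← Multiset.sort_eq (Multiset.ofList (List.ofFn S)) (· ≤ ·), hl]
  rw [hos, hcnt]
  set j : Fin l.length := ⟨r - 1, hi⟩ with hj
  constructor
  · intro hpj
    have hsub : Finset.Iic j ⊆ Finset.univ.filter fun j' : Fin l.length => p (l.get j') := by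
      intro j' hj'
      simp only [Finset.mem_Iic] at hj'
      simp only [Finset.mem_filter, Finset.mem_univ, true_and]
      exact hp (List.Pairwise.rel_get_of_le hsort hj') hpj
    have hjv : (j : ℕ) = r - 1 := rfl
    calc r = (Finset.Iic j).card := by rw [Fin.card_Iic]; omega
    _ ≤ _ := Finset.card_le_card hsub
  · intro hcard
    by_contra hnp
    have hsub : (Finset.univ.filter fun j' : Fin l.length => p (l.get j')) ⊆ Finset.Iio j := by
      intro j' hj'
      simp only [Finset.mem_filter, Finset.mem_univ, true_and] at hj'
      simp only [Finset.mem_Iio]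
      by_contra hge
      exact hnp (hp (List.Pairwise.rel_get_of_le hsort (le_of_not_gt hge)) hj')
    have := Finset.card_le_card hsub
    rw [Fin.card_Iio] at this
    have hjv : (j : ℕ) = r - 1 := rfl
    omega

lemma count_measurable {β : Type*} [MeasurableSpace β] {E : Set β} (hE : MeasurableSet E) (N : ℕ) :
    Measurable fun x : Fin N → β => ((Finset.univ.filter fun i => x i ∈ E).card : ℕ) := by
  classical
  have : (fun x : Fin N → β => ((Finset.univ.filter fun i => x i ∈ E).card : ℕ))
      = fun x => ∑ i : Fin N, if x i ∈ E then 1 else 0 := by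
    funext x; rw [Finset.card_filter]
  rw [this]
  exact Finset.measurable_sum _ fun i _ =>
    Measurable.ite (hE.preimage (measurable_pi_apply i)) measurable_const measurable_const

lemma count_event_measurable {β : Type*} [MeasurableSpace β] {E : Set β} (hE : MeasurableSet E)
    (N r : ℕ) :
    MeasurableSet {x : Fin N → β | r ≤ (Finset.univ.filter fun i => x i ∈ E).card} := by
  have : {x : Fin N → β | r ≤ (Finset.univ.filter fun i => x i ∈ E).card}
      = (fun x : Fin N → β => ((Finset.univ.filter fun i => x i ∈ E).card : ℕ)) ⁻¹' (Ici r) := rfl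
  rw [this]
  exact (count_measurable hE N) (measurableSet_Ici)

lemma pi_count_event {β : Type*} [MeasurableSpace β] (ρ : Measure β) [IsProbabilityMeasure ρ]
    (N r : ℕ) {E : Set β} (hE : MeasurableSet E) :
    (Measure.pi fun _ : Fin N => ρ) {x | r ≤ (Finset.univ.filter fun i => x i ∈ E).card}
      = ∑ A ∈ Finset.univ.powerset.filter (fun A : Finset (Fin N) => r ≤ A.card),
          ρ E ^ A.card * ρ Eᶜ ^ (N - A.card) := by
  classical
  set cell : Finset (Fin N) → Set (Fin N → β) :=
    fun A => Set.pi Set.univ (fun i => if i ∈ A then E else Eᶜ) with hcell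
  have hcellmeas : ∀ A, MeasurableSet (cell A) := fun A =>
    MeasurableSet.pi (Set.countable_univ) (fun i _ => by by_cases h : i ∈ A <;> simp [h, hE, hE.compl])
  have hmem : ∀ (x : Fin N → β) (A : Finset (Fin N)),
      x ∈ cell A ↔ (Finset.univ.filter fun i => x i ∈ E) = A := by
    intro x A
    simp only [hcell, Set.mem_pi, Set.mem_univ, forall_true_left]
    constructor
    · intro h
      ext i
      simp only [Finset.mem_filter, Finset.mem_univ, true_and]
      have := h i
      by_cases hiA : i ∈ A <;> simp [hiA] at this ⊢ <;> tauto
    · intro h i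
      have : x i ∈ E ↔ i ∈ A := by
        rw [← h]; simp
      by_cases hiA : i ∈ A <;> simp [hiA] at this ⊢ <;> tauto
  have hunion : {x : Fin N → β | r ≤ (Finset.univ.filter fun i => x i ∈ E).card}
      = ⋃ A ∈ Finset.univ.powerset.filter (fun A : Finset (Fin N) => r ≤ A.card), cell A := by
    ext x
    simp only [Set.mem_setOf_eq, Set.mem_iUnion, Finset.mem_filter, Finset.mem_powerset]
    constructor
    · intro h
      exact ⟨Finset.univ.filter fun i => x i ∈ E, ⟨⟨Finset.subset_univ _, h⟩, (hmem x _).2 rfl⟩⟩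
    · rintro ⟨A, ⟨⟨-, hcard⟩, hxA⟩⟩
      rw [(hmem x A).1 hxA]; exact hcard
  have hdisj : Set.PairwiseDisjoint
      (↑(Finset.univ.powerset.filter (fun A : Finset (Fin N) => r ≤ A.card))) cell := by
    intro A _ B _ hAB
    refine Set.disjoint_left.2 fun x hxA hxB => hAB ?_
    rw [← (hmem x A).1 hxA, ← (hmem x B).1 hxB]
  rw [hunion, measure_biUnion_finset hdisj (fun A _ => hcellmeas A)]
  refine Finset.sum_congr rfl fun A _ => ?_
  rw [hcell]
  simp only
  rw [Measure.pi_pi]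
  have : ∀ i : Fin N, ρ (if i ∈ A then E else Eᶜ) = if i ∈ A then ρ E else ρ Eᶜ := fun i => by
    by_cases h : i ∈ A <;> simp [h]
  simp_rw [this]
  rw [Finset.prod_ite, Finset.prod_const, Finset.prod_const]
  congr 1
  · congr 1; simp [Finset.filter_mem_eq_inter]
  · congr 1
    have : Finset.univ.filter (fun i => ¬ i ∈ A) = Aᶜ := by
      ext i; simp
    rw [this, Finset.card_compl]
    simp

noncomputable def rtail (N r : ℕ) (p : ℝ) : ℝ :=
  ∑ A ∈ Finset.univ.powerset.filter (fun A : Finset (Fin N) => r ≤ A.card),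
    p ^ A.card * (1 - p) ^ (N - A.card)

noncomputable def Unif : Measure ℝ := volume.restrict (Icc (0:ℝ) 1)

instance restrict_prob : IsProbabilityMeasure (volume.restrict (Icc (0:ℝ) 1)) :=
  ⟨by rw [Measure.restrict_apply_univ, Real.volume_Icc]; norm_num⟩

instance Unif_prob : IsProbabilityMeasure Unif := restrict_prob

/-- Bridge: the probability of the count event equals `rtail` of `(ρ E).toReal`. -/
lemma pi_count_event_toReal {β : Type*} [MeasurableSpace β] (ρ : Measure β)
    [IsProbabilityMeasure ρ] (N r : ℕ) {E : Set β} (hE : MeasurableSet E) :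
    ((Measure.pi fun _ : Fin N => ρ) {x | r ≤ (Finset.univ.filter fun i => x i ∈ E).card}).toReal
      = rtail N r (ρ E).toReal := by
  rw [pi_count_event ρ N r hE, ENNReal.toReal_sum, rtail]
  · refine Finset.sum_congr rfl fun A _ => ?_
    rw [ENNReal.toReal_mul, ENNReal.toReal_pow, ENNReal.toReal_pow]
    congr 2
    rw [measure_compl hE (measure_ne_top ρ E), measure_univ,
      ENNReal.toReal_sub_of_le prob_le_one ENNReal.one_ne_top, ENNReal.toReal_one]
  · intro A _
    exact ENNReal.mul_ne_top (ENNReal.pow_ne_top (measure_ne_top ρ E))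
      (ENNReal.pow_ne_top (measure_ne_top ρ Eᶜ))

lemma Unif_Iio {p : ℝ} (hp : p ∈ Icc (0:ℝ) 1) : Unif (Iio p) = ENNReal.ofReal p := by
  rw [Unif, Measure.restrict_apply measurableSet_Iio]
  have : Iio p ∩ Icc (0:ℝ) 1 = Ico 0 p := by
    ext x
    simp only [mem_inter_iff, mem_Iio, mem_Icc, mem_Ico]
    constructor
    · rintro ⟨h1, h2, h3⟩; exact ⟨h2, h1⟩
    · rintro ⟨h1, h2⟩; exact ⟨h2, h1, le_trans (le_of_lt h2) hp.2⟩
  rw [this, Real.volume_Ico, sub_zero]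

lemma rtail_eq_unif {N r : ℕ} {p : ℝ} (hp : p ∈ Icc (0:ℝ) 1) :
    rtail N r p = ((Measure.pi fun _ : Fin N => Unif)
      {x | r ≤ (Finset.univ.filter fun i => x i ∈ Iio p).card}).toReal := by
  convert (pi_count_event_toReal Unif N r (E := Iio p) measurableSet_Iio).symm using 1
  · rw [Unif_Iio hp,
      ENNReal.toReal_ofReal hp.1]
  · congr! 1

lemma rtail_mono {N r : ℕ} {p p' : ℝ} (hp : p ∈ Icc (0:ℝ) 1) (hp' : p' ∈ Icc (0:ℝ) 1)
    (h : p ≤ p') : rtail N r p ≤ rtail N r p' := by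
  rw [rtail_eq_unif hp, rtail_eq_unif hp']
  refine ENNReal.toReal_mono (measure_ne_top _ _) (measure_mono fun x hx => ?_)
  simp only [mem_setOf_eq] at hx ⊢
  refine le_trans hx (Finset.card_le_card (Finset.monotone_filter_right _ ?_))
  intro i _ hi
  exact lt_of_lt_of_le hi h

lemma rtail_mem {N r : ℕ} {p : ℝ} (hp : p ∈ Icc (0:ℝ) 1) : rtail N r p ∈ Icc (0:ℝ) 1 := by
  rw [rtail_eq_unif hp]
  constructor
  · exact ENNReal.toReal_nonneg
  · have h := ENNReal.toReal_mono ENNReal.one_ne_top (prob_le_one (μ := Measure.pi fun _ : Fin N => Unif)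
      (s := {x | r ≤ (Finset.univ.filter fun i => x i ∈ Iio p).card}))
    simpa using h

lemma rtail_continuous (N r : ℕ) : Continuous (rtail N r) := by
  refine continuous_finset_sum _ fun A _ => ?_
  exact (continuous_pow _).comp continuous_id |>.mul
    ((continuous_pow _).comp (continuous_const.sub continuous_id))

lemma rtail_zero {N r : ℕ} (hr1 : 1 ≤ r) : rtail N r 0 = 0 := by
  refine Finset.sum_eq_zero fun A hA => ?_
  simp only [Finset.mem_filter, Finset.mem_powerset] at hA
  rw [zero_pow (by omega), zero_mul]

lemma rtail_one {N r : ℕ} (hrN : r ≤ N) : rtail N r 1 = 1 := by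
  rw [rtail]
  rw [Finset.sum_eq_single Finset.univ]
  · simp
  · intro A hA hAne
    simp only [Finset.mem_filter, Finset.mem_powerset] at hA
    have hcard : A.card < N := by
      rcases lt_or_eq_of_le (Finset.card_le_card hA.1) with h | h
      · simpa using h
      · exact absurd (Finset.eq_univ_of_card A (by simpa using h)) hAne
    rw [sub_self, zero_pow (by omega), mul_zero]
  · intro h
    exfalso
    exact h (by simp [Finset.mem_filter, hrN])

lemma orderStat_measurable {N r : ℕ} (hr1 : 1 ≤ r) (hrN : r ≤ N) :
    Measurable fun S : Fin N → ℝ => orderStat S r := by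
  apply measurable_of_Iic
  intro t
  have : (fun S : Fin N → ℝ => orderStat S r) ⁻¹' Iic t
      = {S : Fin N → ℝ | r ≤ (Finset.univ.filter fun i => S i ∈ Iic t).card} := by
    ext S
    simp only [mem_preimage, mem_Iic, mem_setOf_eq]
    exact orderStat_iff S hr1 hrN (fun a => a ≤ t) (fun a b hab hb => le_trans hab hb)
  rw [this]
  exact count_event_measurable measurableSet_Iic N r

lemma betaCDF_eq {N r : ℕ} (hr1 : 1 ≤ r) (hrN : r ≤ N) (t : ℝ) :
    betaCDF N r t = rtail N r (Unif (Iic t)).toReal := by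
  have hinst : IsProbabilityMeasure (unifPi N) := by
    rw [unifPi]; infer_instance
  rw [betaCDF, betaOS, Measure.map_apply (orderStat_measurable hr1 hrN) measurableSet_Iic]
  have : (fun u : Fin N → ℝ => orderStat u r) ⁻¹' Iic t
      = {S : Fin N → ℝ | r ≤ (Finset.univ.filter fun i => S i ∈ Iic t).card} := by
    ext S
    simp only [mem_preimage, mem_Iic, mem_setOf_eq]
    exact orderStat_iff S hr1 hrN (fun a => a ≤ t) (fun a b hab hb => le_trans hab hb)
  rw [this, unifPi]
  exact pi_count_event_toReal Unif N r measurableSet_Iic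

lemma Unif_Iic_toReal (t : ℝ) : (Unif (Iic t)).toReal = max 0 (min t 1) := by
  rw [Unif, Measure.restrict_apply measurableSet_Iic]
  rcases lt_or_ge t 0 with h | h
  · have : Iic t ∩ Icc (0:ℝ) 1 = ∅ := by
      ext x; simp only [mem_inter_iff, mem_Iic, mem_Icc, mem_empty_iff_false, iff_false]
      rintro ⟨h1, h2, -⟩; linarith
    rw [this, measure_empty, ENNReal.toReal_zero,
      min_eq_left (by linarith : t ≤ 1), max_eq_left (by linarith : t ≤ 0)]
  · rcases le_or_gt t 1 with h1 | h1
    · have : Iic t ∩ Icc (0:ℝ) 1 = Icc 0 t := by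
        ext x; simp only [mem_inter_iff, mem_Iic, mem_Icc]
        constructor
        · rintro ⟨a, b, c⟩; exact ⟨b, a⟩
        · rintro ⟨a, b⟩; exact ⟨b, a, le_trans b h1⟩
      rw [this, Real.volume_Icc, sub_zero, ENNReal.toReal_ofReal h]
      rw [min_eq_left h1, max_eq_right h]
    · have : Iic t ∩ Icc (0:ℝ) 1 = Icc 0 1 := by
        ext x; simp only [mem_inter_iff, mem_Iic, mem_Icc]
        constructor
        · rintro ⟨a, b, c⟩; exact ⟨b, c⟩
        · rintro ⟨a, b⟩; exact ⟨le_trans b (le_of_lt h1), a, b⟩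
      rw [this, Real.volume_Icc]
      rw [min_eq_right (le_of_lt h1), max_eq_right (by norm_num : (0:ℝ) ≤ 1)]
      norm_num

lemma clip_mem (t : ℝ) : max 0 (min t 1) ∈ Icc (0:ℝ) 1 :=
  ⟨le_max_left _ _, max_le (by norm_num) (min_le_right _ _)⟩

lemma clip_self {t : ℝ} (ht : t ∈ Icc (0:ℝ) 1) : max 0 (min t 1) = t := by
  rw [min_eq_left ht.2, max_eq_right ht.1]

/-- The key quantile lemma: `betaQuantile N r b` lies in `(0,1)` and is the exact
solution of `rtail N r c = b`. -/
lemma betaQuantile_spec {N r : ℕ} (hr1 : 1 ≤ r) (hrN : r ≤ N) {b : ℝ} (hb : b ∈ Ioo (0:ℝ) 1) :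
    betaQuantile N r b ∈ Ioo (0:ℝ) 1 ∧ rtail N r (betaQuantile N r b) = b := by
  set H : ℝ → ℝ := betaCDF N r with hH
  have Hdef : ∀ t, H t = rtail N r (max 0 (min t 1)) := by
    intro t; rw [hH, betaCDF_eq hr1 hrN, Unif_Iic_toReal]
  have Hcont : Continuous H := by
    have : H = fun t => rtail N r (max 0 (min t 1)) := funext Hdef
    rw [this]
    exact (rtail_continuous N r).comp (continuous_const.max (continuous_id.min continuous_const))
  have Hmono : Monotone H := by
    intro a c hac
    rw [Hdef, Hdef]
    refine rtail_mono (clip_mem a) (clip_mem c) ?_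
    exact max_le_max le_rfl (min_le_min hac le_rfl)
  have H1 : H 1 = 1 := by
    rw [Hdef]
    norm_num
    exact rtail_one hrN
  have H0 : ∀ t ≤ 0, H t = 0 := by
    intro t ht
    rw [Hdef]
    have : max 0 (min t 1) = 0 := by
      rw [max_eq_left]
      exact le_trans (min_le_left _ _) ht
    rw [this]
    exact rtail_zero hr1
  set S : Set ℝ := {x | b ≤ H x} with hS
  have hne : S.Nonempty := ⟨1, by rw [mem_setOf_eq, H1]; exact le_of_lt hb.2⟩
  have hbd : BddBelow S := by
    refine ⟨0, fun x hx => ?_⟩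
    by_contra hneg
    push_neg at hneg
    rw [mem_setOf_eq] at hx
    rw [H0 x (le_of_lt hneg)] at hx
    linarith [hb.1]
  have hq : betaQuantile N r b = sInf S := rfl
  set c := sInf S with hc
  have hc0 : 0 ≤ c := le_csInf hne fun x hx => by
    by_contra hneg
    push_neg at hneg
    rw [mem_setOf_eq, H0 x (le_of_lt hneg)] at hx
    linarith [hb.1]
  have hc1 : c ≤ 1 := csInf_le hbd (show (1:ℝ) ∈ S by
    show b ≤ H 1
    rw [H1]; exact le_of_lt hb.2)
  have hseq : Filter.Tendsto (fun k : ℕ => c + 1/(k+1)) Filter.atTop (nhds c) := by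
    have := tendsto_one_div_add_atTop_nhds_zero_nat (𝕜 := ℝ)
    simpa using Filter.Tendsto.add (tendsto_const_nhds (x := c)) this
  have hseq' : Filter.Tendsto (fun k : ℕ => c - 1/(k+1)) Filter.atTop (nhds c) := by
    have := tendsto_one_div_add_atTop_nhds_zero_nat (𝕜 := ℝ)
    simpa using Filter.Tendsto.sub (tendsto_const_nhds (x := c)) this
  have hge : b ≤ H c := by
    have hev : ∀ k : ℕ, b ≤ H (c + 1/(k+1)) := by
      intro k
      have hpos : (0:ℝ) < 1/(k+1) := by positivity
      obtain ⟨x, hxS, hxlt⟩ := exists_lt_of_csInf_lt hne (by linarith : sInf S < c + 1/(k+1))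
      exact le_trans hxS (Hmono (le_of_lt hxlt))
    exact ge_of_tendsto ((Hcont.tendsto c).comp hseq) (Filter.Eventually.of_forall hev)
  have hle : H c ≤ b := by
    have hev : ∀ k : ℕ, H (c - 1/(k+1)) ≤ b := by
      intro k
      have hpos : (0:ℝ) < 1/(k+1) := by positivity
      by_contra hgt
      push_neg at hgt
      have : c - 1/(k+1) ∈ S := le_of_lt hgt
      have := csInf_le hbd this
      linarith
    exact le_of_tendsto ((Hcont.tendsto c).comp hseq') (Filter.Eventually.of_forall hev)
  have hHc : H c = b := le_antisymm hle hge
  have hrc : rtail N r c = b := by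
    rw [← hHc, Hdef, clip_self ⟨hc0, hc1⟩]
  have hc0' : c ≠ 0 := by
    intro h
    rw [h, rtail_zero hr1] at hrc
    exact absurd hrc.symm (ne_of_gt hb.1)
  have hc1' : c ≠ 1 := by
    intro h
    rw [h, rtail_one hrN] at hrc
    exact absurd hrc.symm (ne_of_lt hb.2)
  refine ⟨⟨lt_of_le_of_ne hc0 (Ne.symm hc0'), lt_of_le_of_ne hc1 hc1'⟩, hrc⟩

/-- The joint law of the array `(W (some (i,j)))_{i,j}`, grouped with the group index `j`
outermost, is the iterated product measure. -/
lemma map_array_eq_pi {Ω : Type*} [MeasurableSpace Ω] (μ : Measure Ω) [IsProbabilityMeasure μ]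
    {n m : ℕ} (W : Option (Fin n × Fin m) → Ω → ℝ) (ν : Measure ℝ) [IsProbabilityMeasure ν]
    (hmeas : ∀ a, Measurable (W a))
    (hindep : iIndepFun W μ)
    (hlaw : ∀ a, Measure.map (W a) μ = ν) :
    Measure.map (fun ω (j : Fin m) (i : Fin n) => W (some (i, j)) ω) μ
      = Measure.pi (fun _ : Fin m => Measure.pi (fun _ : Fin n => ν)) := by
  have hX : Measurable (fun ω (j : Fin m) (i : Fin n) => W (some (i, j)) ω) :=
    measurable_pi_lambda _ fun j => measurable_pi_lambda _ fun i => hmeas _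
  have hWν : ∀ (a : Option (Fin n × Fin m)) {s : Set ℝ}, MeasurableSet s →
      μ (W a ⁻¹' s) = ν s := by
    intro a s hs
    rw [← hlaw a, Measure.map_apply (hmeas a) hs]
  have hfin : ∀ _j : Fin m, (Measure.pi (fun _ : Fin n => ν)).FiniteSpanningSetsIn
      (Set.pi univ '' Set.pi univ fun _ : Fin n => {s : Set ℝ | MeasurableSet s}) := by
    intro _
    refine ⟨fun _ => univ, fun _ => ⟨fun _ => univ, by simp, by simp⟩, fun _ => ?_, iUnion_const _⟩
    rw [measure_univ]; exact ENNReal.one_lt_top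
  refine (Measure.pi_eq_generateFrom
    (fun _ => generateFrom_pi)
    (fun _ => isPiSystem_pi) hfin ?_).symm
  intro B hB
  choose s hs hsB using hB
  have hsmeas : ∀ j i, MeasurableSet (s j i) := by
    intro j i
    exact hs j i (mem_univ i)
  have hBmeas : ∀ j, MeasurableSet (B j) := by
    intro j
    rw [← hsB j]
    exact MeasurableSet.univ_pi fun i => hsmeas j i
  rw [Measure.map_apply hX (MeasurableSet.univ_pi hBmeas)]
  -- rewrite the preimage as an intersection over all indices
  set s' : Option (Fin n × Fin m) → Set ℝ :=
    fun a => Option.rec univ (fun p => s p.2 p.1) a with hs'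
  have hpre : (fun ω (j : Fin m) (i : Fin n) => W (some (i, j)) ω) ⁻¹' (Set.pi univ B)
      = ⋂ a : Option (Fin n × Fin m), W a ⁻¹' (s' a) := by
    ext ω
    simp only [mem_preimage, mem_pi, mem_univ, forall_true_left, mem_iInter]
    constructor
    · intro h a
      cases a with
      | none => simp [hs']
      | some p =>
        have := h p.2
        rw [← hsB p.2] at this
        simpa [hs'] using this p.1 (mem_univ p.1)
    · intro h j
      rw [← hsB j]
      intro i _
      simpa [hs'] using h (some (i, j))
  rw [hpre, hindep.meas_iInter (fun a => ⟨s' a, by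
    cases a with
    | none => exact MeasurableSet.univ
    | some p => exact hsmeas p.2 p.1, rfl⟩)]
  rw [Fintype.prod_option]
  have h1 : μ (W none ⁻¹' s' none) = 1 := by
    simp [hs', hWν none MeasurableSet.univ]
  rw [h1, one_mul]
  rw [Fintype.prod_prod_type]
  have : ∀ j, Measure.pi (fun _ : Fin n => ν) (B j) = ∏ i, ν (s j i) := by
    intro j
    rw [← hsB j, Measure.pi_pi]
  simp_rw [this]
  rw [Finset.prod_comm]
  refine Finset.prod_congr rfl fun j _ => Finset.prod_congr rfl fun i _ => ?_
  exact hWν (some (i, j)) (hsmeas j i)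

section CDF
variable (ν : Measure ℝ) [IsProbabilityMeasure ν]

lemma nu_Iic_eq (x : ℝ) : ν (Iic x) = ENNReal.ofReal ((ν (Iic x)).toReal) :=
  (ENNReal.ofReal_toReal (measure_ne_top ν _)).symm

lemma F_mono : Monotone (fun x => (ν (Iic x)).toReal) := fun a b hab =>
  ENNReal.toReal_mono (measure_ne_top ν _) (measure_mono (Iic_subset_Iic.2 hab))

lemma exists_F_ge {q : ℝ} (hq1 : q < 1) : ∃ s₀ : ℝ, q ≤ (ν (Iic s₀)).toReal := by
  have htop : Filter.Tendsto (fun x => ν (Iic x)) Filter.atTop (nhds 1) := by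
    have := tendsto_measure_Iic_atTop ν
    rwa [measure_univ] at this
  by_contra hcon
  push_neg at hcon
  have hle : ∀ x, ν (Iic x) ≤ ENNReal.ofReal q := fun x => by
    rw [nu_Iic_eq ν x]
    exact ENNReal.ofReal_le_ofReal (le_of_lt (hcon x))
  have h1 : (1 : ENNReal) ≤ ENNReal.ofReal q :=
    le_of_tendsto htop (Filter.Eventually.of_forall hle)
  exact absurd h1 (not_le.2 (ENNReal.ofReal_lt_one.2 hq1))

lemma bddAbove_F_lt {q : ℝ} (hq1 : q < 1) : BddAbove {x | (ν (Iic x)).toReal < q} := by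
  obtain ⟨s₀, hs₀⟩ := exists_F_ge ν hq1
  refine ⟨s₀, fun x hx => ?_⟩
  by_contra hgt
  push_neg at hgt
  exact absurd hx.out (not_lt.2 (le_trans hs₀ (F_mono ν (le_of_lt hgt))))

/-- For a probability measure `ν` with cdf `F` and `q < 1`, the set `{F < q}` has
measure at most `q`. -/
lemma measure_F_lt_le {q : ℝ} (hq1 : q < 1) :
    ν {x | (ν (Iic x)).toReal < q} ≤ ENNReal.ofReal q := by
  set F : ℝ → ℝ := fun x => (ν (Iic x)).toReal with hF
  set A : Set ℝ := {x | F x < q} with hA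
  rcases eq_empty_or_nonempty A with hemp | hne
  · rw [hemp]; simp
  have hbdd : BddAbove A := bddAbove_F_lt ν hq1
  set c := sSup A with hc
  have hFlt : ∀ s < c, F s < q := by
    intro s hs
    obtain ⟨a, haA, hsa⟩ := exists_lt_of_lt_csSup hne hs
    exact lt_of_le_of_lt (F_mono ν (le_of_lt hsa)) haA
  have hIio : ν (Iio c) ≤ ENNReal.ofReal q := by
    have hU : Iio c = ⋃ k : ℕ, Iic (c - 1/(k+1)) := by
      ext x
      simp only [mem_Iio, mem_iUnion, mem_Iic]
      constructor
      · intro hx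
        obtain ⟨k, hk⟩ := exists_nat_one_div_lt (by linarith : (0:ℝ) < c - x)
        exact ⟨k, by push_cast at hk ⊢; linarith⟩
      · rintro ⟨k, hk⟩
        have : (0:ℝ) < 1/(k+1) := by positivity
        linarith
    have hdir : Directed (· ⊆ ·) (fun k : ℕ => Iic (c - 1/((k:ℝ)+1))) := by
      intro a b
      rcases le_total a b with h | h
      · refine ⟨b, Iic_subset_Iic.2 (by
          have : (1:ℝ)/((b:ℝ)+1) ≤ 1/((a:ℝ)+1) :=
            one_div_le_one_div_of_le (by positivity)
              (by have : (a:ℝ) ≤ b := Nat.cast_le.2 h; linarith)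
          linarith), le_rfl⟩
      · refine ⟨a, le_rfl, Iic_subset_Iic.2 (by
          have : (1:ℝ)/((a:ℝ)+1) ≤ 1/((b:ℝ)+1) :=
            one_div_le_one_div_of_le (by positivity)
              (by have : (b:ℝ) ≤ a := Nat.cast_le.2 h; linarith)
          linarith)⟩
    rw [hU, Directed.measure_iUnion hdir]
    refine iSup_le fun k => ?_
    have : (0:ℝ) < 1/((k:ℝ)+1) := by positivity
    rw [nu_Iic_eq ν _]
    exact ENNReal.ofReal_le_ofReal (le_of_lt (hFlt _ (by linarith)))
  by_cases hcA : c ∈ A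
  · calc ν A ≤ ν (Iic c) := measure_mono fun x hx => le_csSup hbdd hx
    _ = ENNReal.ofReal (F c) := (nu_Iic_eq ν c)
    _ ≤ ENNReal.ofReal q := ENNReal.ofReal_le_ofReal (le_of_lt hcA.out)
  · refine le_trans (measure_mono fun x hx => ?_) hIio
    exact lt_of_le_of_ne (le_csSup hbdd hx) (fun h : x = c => hcA (h ▸ hx))

/-- For an atomless probability measure, the set `{F < q}` has measure exactly `q`,
for `q ∈ (0,1)`. -/
lemma measure_F_lt_eq (hatom : ∀ x : ℝ, ν {x} = 0) {q : ℝ} (hq0 : 0 < q) (hq1 : q < 1) :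
    ν {x | (ν (Iic x)).toReal < q} = ENNReal.ofReal q := by
  set F : ℝ → ℝ := fun x => (ν (Iic x)).toReal with hF
  set A : Set ℝ := {x | F x < q} with hA
  refine le_antisymm (measure_F_lt_le ν hq1) ?_
  -- A is nonempty
  have hbot : Filter.Tendsto (fun k : ℕ => ν (Iic (-(k:ℝ)))) Filter.atTop (nhds 0) := by
    have h0 : (⋂ k : ℕ, Iic (-(k:ℝ))) = ∅ := by
      ext x
      simp only [mem_iInter, mem_Iic, mem_empty_iff_false, iff_false, not_forall, not_le]
      obtain ⟨k, hk⟩ := exists_nat_gt (-x)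
      exact ⟨k, by linarith⟩
    have := tendsto_measure_iInter_atTop (μ := ν) (s := fun k : ℕ => Iic (-(k:ℝ)))
      (fun k => measurableSet_Iic.nullMeasurableSet)
      (fun a b hab => Iic_subset_Iic.2 (by push_cast; exact neg_le_neg (by exact_mod_cast hab)))
      ⟨0, measure_ne_top ν _⟩
    rw [h0, measure_empty] at this
    exact this
  have hne : A.Nonempty := by
    by_contra hcon
    rw [not_nonempty_iff_eq_empty] at hcon
    have hge : ∀ k : ℕ, ENNReal.ofReal q ≤ ν (Iic (-(k:ℝ))) := by
      intro k
      have hnm : ¬ ((-(k:ℝ)) ∈ A) := by rw [hcon]; exact notMem_empty _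
      rw [hA, mem_setOf_eq, not_lt] at hnm
      rw [nu_Iic_eq ν _]
      exact ENNReal.ofReal_le_ofReal hnm
    have := le_of_tendsto_of_tendsto tendsto_const_nhds hbot
      (Filter.Eventually.of_forall hge)
    simp only [nonpos_iff_eq_zero, ENNReal.ofReal_eq_zero] at this
    linarith
  have hbdd : BddAbove A := bddAbove_F_lt ν hq1
  set c := sSup A with hc
  have hFlt : ∀ s < c, F s < q := by
    intro s hs
    obtain ⟨a, haA, hsa⟩ := exists_lt_of_lt_csSup hne hs
    exact lt_of_le_of_lt (F_mono ν (le_of_lt hsa)) haA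
  have hIic_ge : ENNReal.ofReal q ≤ ν (Iic c) := by
    have hI : Iic c = ⋂ k : ℕ, Iic (c + 1/(k+1)) := by
      ext x
      simp only [mem_Iic, mem_iInter]
      constructor
      · intro hx k
        have : (0:ℝ) < 1/((k:ℝ)+1) := by positivity
        linarith
      · intro h
        by_contra hgt
        push_neg at hgt
        obtain ⟨k, hk⟩ := exists_nat_one_div_lt (by linarith : (0:ℝ) < x - c)
        have := h k
        push_cast at hk this
        linarith
    have hanti : Antitone (fun k : ℕ => Iic (c + 1/((k:ℝ)+1))) := by
      intro a b hab
      refine Iic_subset_Iic.2 ?_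
      have : (1:ℝ)/((b:ℝ)+1) ≤ 1/((a:ℝ)+1) :=
        one_div_le_one_div_of_le (by positivity)
          (by have : (a:ℝ) ≤ b := Nat.cast_le.2 hab; linarith)
      linarith
    rw [hI, hanti.measure_iInter (fun k => measurableSet_Iic.nullMeasurableSet)
      ⟨0, measure_ne_top ν _⟩]
    refine le_iInf fun k => ?_
    have hnotA : c + 1/((k:ℝ)+1) ∉ A := fun hmem => by
      have : (0:ℝ) < 1/((k:ℝ)+1) := by positivity
      have := le_csSup hbdd hmem
      linarith
    rw [hA, mem_setOf_eq, not_lt] at hnotA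
    rw [nu_Iic_eq ν _]
    exact ENNReal.ofReal_le_ofReal hnotA
  have hIioIic : ν (Iio c) = ν (Iic c) := by
    have hsplit : Iic c = Iio c ∪ {c} := by
      ext x; simp only [mem_Iic, mem_union, mem_Iio, mem_singleton_iff]
      constructor
      · intro h; rcases lt_or_eq_of_le h with h | h; exacts [Or.inl h, Or.inr h]
      · rintro (h | h); exacts [le_of_lt h, le_of_eq h]
    rw [hsplit, measure_union (by simp [Set.disjoint_singleton_right])
      (measurableSet_singleton c), hatom c, add_zero]
  calc ENNReal.ofReal q ≤ ν (Iic c) := hIic_ge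
  _ = ν (Iio c) := hIioIic.symm
  _ ≤ ν A := measure_mono fun s hs => hFlt s hs
end CDF

/-- One-shot federated setting with `m` agents each holding `n` i.i.d.
scores with cdf `F`: the training-conditional coverage
`1 - α_{ℓ,k}(D) = P(Y ∈ Ĉ_{ℓ,k}(X) | D) = F(S_(ℓ,k))` satisfies
`P(1 - α_{ℓ,k}(D) ≥ F_{U_(ℓ:n)}⁻¹(F_{U_(k:m)}⁻¹(β))) ≥ 1 - β`,
with equality when the scores are almost surely distinct. -/
theorem conditional_coverage_qq {Ω : Type*} [MeasurableSpace Ω]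
    (μ : Measure Ω) [IsProbabilityMeasure μ]
    {n m : ℕ} (hn : 1 ≤ n) (hm : 1 ≤ m)
    (ℓ k : ℕ) (hℓ1 : 1 ≤ ℓ) (hℓn : ℓ ≤ n) (hk1 : 1 ≤ k) (hkm : k ≤ m)
    (β : ℝ) (hβ : β ∈ Ioo (0:ℝ) 1)
    (W : Option (Fin n × Fin m) → Ω → ℝ) (ν : Measure ℝ)
    (hmeas : ∀ a, Measurable (W a))
    (hindep : iIndepFun W μ)
    (hlaw : ∀ a, Measure.map (W a) μ = ν)
    (F : ℝ → ℝ) (hF : F = fun x => (ν (Iic x)).toReal)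
    (coverage : Ω → ℝ)
    (hcov : coverage = fun ω => F (qqStat ℓ k (fun i j => W (some (i, j)) ω))) :
    ENNReal.ofReal (1 - β)
      ≤ μ {ω | betaQuantile n ℓ (betaQuantile m k β) ≤ coverage ω}
    ∧ ((∀ a b : Option (Fin n × Fin m), a ≠ b → μ {ω | W a ω = W b ω} = 0) →
        (μ {ω | betaQuantile n ℓ (betaQuantile m k β) ≤ coverage ω}).toReal = 1 - β) := by
  subst hF hcov
  haveI hνprob : IsProbabilityMeasure ν := by
    rw [← hlaw none]
    exact Measure.isProbabilityMeasure_map (hmeas none).aemeasurable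
  haveI : IsProbabilityMeasure (Measure.pi fun _ : Fin n => ν) := by infer_instance
  haveI : IsProbabilityMeasure
      (Measure.pi fun _ : Fin m => Measure.pi fun _ : Fin n => ν) := by infer_instance
  obtain ⟨hts1, hts2⟩ := betaQuantile_spec hk1 hkm hβ
  set t : ℝ := betaQuantile m k β with ht
  obtain ⟨hqs1, hqs2⟩ := betaQuantile_spec hℓ1 hℓn hts1
  set q : ℝ := betaQuantile n ℓ t with hq
  -- the lower set A = {x | F x < q}
  set A : Set ℝ := {x | (ν (Iic x)).toReal < q} with hA
  clear_value A
  have hAmem : ∀ x : ℝ, x ∈ A ↔ (ν (Iic x)).toReal < q := by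
    intro x; rw [hA]; exact Iff.rfl
  have hAmeas : MeasurableSet A := by
    rw [hA]
    have : {x : ℝ | (ν (Iic x)).toReal < q} = (fun x => (ν (Iic x)).toReal) ⁻¹' (Iio q) := rfl
    rw [this]
    exact ((F_mono ν).measurable) measurableSet_Iio
  have hAlow : ∀ ⦃a b : ℝ⦄, a ≤ b → b ∈ A → a ∈ A := by
    intro a b hab hb
    rw [hAmem] at hb ⊢
    exact lt_of_le_of_lt (F_mono ν hab) hb
  -- the two count events
  set Ecol : Set (Fin n → ℝ) :=
    {c | ℓ ≤ (Finset.univ.filter fun i => c i ∈ A).card} with hEcol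
  clear_value Ecol
  have hEcolmem : ∀ c : Fin n → ℝ, c ∈ Ecol ↔ ℓ ≤ (Finset.univ.filter fun i => c i ∈ A).card := by
    intro c; rw [hEcol]; exact Iff.rfl
  have hEcolmeas : MeasurableSet Ecol := by rw [hEcol]; exact count_event_measurable hAmeas n ℓ
  set B : Set (Fin m → Fin n → ℝ) :=
    {y | k ≤ (Finset.univ.filter fun j => y j ∈ Ecol).card} with hB
  clear_value B
  have hBmem : ∀ y : Fin m → Fin n → ℝ,
      y ∈ B ↔ k ≤ (Finset.univ.filter fun j => y j ∈ Ecol).card := by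
    intro y; rw [hB]; exact Iff.rfl
  have hBmeas : MeasurableSet B := by rw [hB]; exact count_event_measurable hEcolmeas m k
  set X : Ω → Fin m → Fin n → ℝ := fun ω j i => W (some (i, j)) ω with hX
  have hXmeas : Measurable X :=
    measurable_pi_lambda _ fun j => measurable_pi_lambda _ fun i => hmeas _
  -- the pointwise event identification
  have hevent : ∀ ω : Ω,
      (fun ω => (ν (Iic (qqStat ℓ k fun i j => W (some (i, j)) ω))).toReal) ω < q
        ↔ X ω ∈ B := by
    intro ω
    set Z : Fin n → Fin m → ℝ := fun i j => W (some (i, j)) ω with hZ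
    have h1 : (ν (Iic (qqStat ℓ k Z))).toReal < q ↔ qqStat ℓ k Z ∈ A := (hAmem _).symm
    rw [h1]
    rw [qqStat]
    rw [orderStat_iff _ hk1 hkm (fun s => s ∈ A) hAlow]
    rw [hBmem]
    have hcola : ∀ j : Fin m,
        (orderStat (fun i => Z i j) ℓ ∈ A) ↔ X ω j ∈ Ecol := by
      intro j
      rw [orderStat_iff _ hℓ1 hℓn (fun s => s ∈ A) hAlow, hEcolmem]
    have hfeq : (Finset.univ.filter fun j => orderStat (fun i => Z i j) ℓ ∈ A)
        = (Finset.univ.filter fun j => X ω j ∈ Ecol) :=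
      Finset.filter_congr fun j _ => hcola j
    rw [hfeq]
  have hset : {ω | q ≤ (fun ω => (ν (Iic (qqStat ℓ k fun i j => W (some (i, j)) ω))).toReal) ω}
      = (X ⁻¹' B)ᶜ := by
    ext ω
    simp only [mem_setOf_eq, mem_compl_iff, mem_preimage]
    rw [← hevent ω, not_lt]
  -- law of the array
  have hmap : Measure.map X μ
      = Measure.pi (fun _ : Fin m => Measure.pi (fun _ : Fin n => ν)) :=
    map_array_eq_pi μ W ν hmeas hindep hlaw
  have hμB : μ (X ⁻¹' B) = (Measure.pi (fun _ : Fin m => Measure.pi (fun _ : Fin n => ν))) B := by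
    rw [← hmap, Measure.map_apply hXmeas hBmeas]
  set a : ℝ := (ν A).toReal with haa
  have ha01 : a ∈ Icc (0:ℝ) 1 := by
    constructor
    · exact ENNReal.toReal_nonneg
    · have := ENNReal.toReal_mono ENNReal.one_ne_top (prob_le_one (μ := ν) (s := A))
      simpa using this
  have hq01 : q ∈ Icc (0:ℝ) 1 := ⟨le_of_lt hqs1.1, le_of_lt hqs1.2⟩
  have haq : a ≤ q := by
    have h : ν A ≤ ENNReal.ofReal q := by rw [hA]; exact measure_F_lt_le ν hqs1.2
    calc a ≤ (ENNReal.ofReal q).toReal := ENNReal.toReal_mono ENNReal.ofReal_ne_top h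
    _ = q := ENNReal.toReal_ofReal hq01.1
  have hPtoReal : (μ (X ⁻¹' B)).toReal = rtail m k (rtail n ℓ a) := by
    rw [hμB]
    have h2 := pi_count_event_toReal (Measure.pi (fun _ : Fin n => ν)) m k hEcolmeas
    have h3 := pi_count_event_toReal ν n ℓ hAmeas
    rw [hB, h2]
    congr 1
    rw [← h3, hEcol]
  -- main bound
  have hchain : rtail m k (rtail n ℓ a) ≤ β := by
    have hstep1 : rtail n ℓ a ≤ rtail n ℓ q := rtail_mono ha01 hq01 haq
    have hin1 : rtail n ℓ a ∈ Icc (0:ℝ) 1 := rtail_mem ha01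
    have hin2 : rtail n ℓ q ∈ Icc (0:ℝ) 1 := rtail_mem hq01
    calc rtail m k (rtail n ℓ a) ≤ rtail m k (rtail n ℓ q) := rtail_mono hin1 hin2 hstep1
    _ = rtail m k t := by rw [hqs2]
    _ = β := hts2
  have hPle : μ (X ⁻¹' B) ≤ ENNReal.ofReal β := by
    rw [← ENNReal.ofReal_toReal (measure_ne_top μ (X ⁻¹' B))]
    exact ENNReal.ofReal_le_ofReal (le_trans (le_of_eq hPtoReal) hchain)
  have hcomplmeas : MeasurableSet (X ⁻¹' B) := hXmeas hBmeas
  have hcompl : μ ((X ⁻¹' B)ᶜ) = 1 - μ (X ⁻¹' B) := by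
    rw [measure_compl hcomplmeas (measure_ne_top μ _), measure_univ]
  constructor
  · rw [hset, hcompl]
    calc ENNReal.ofReal (1 - β) = 1 - ENNReal.ofReal β := by
          rw [ENNReal.ofReal_sub 1 (le_of_lt hβ.1), ENNReal.ofReal_one]
    _ ≤ 1 - μ (X ⁻¹' B) := tsub_le_tsub le_rfl hPle
  · intro hdist
    -- ν is atomless
    have hatom : ∀ x : ℝ, ν {x} = 0 := by
      intro x
      set i0 : Fin n := ⟨0, hn⟩
      set j0 : Fin m := ⟨0, hm⟩
      have hne : (none : Option (Fin n × Fin m)) ≠ some (i0, j0) := by simp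
      have hpair := (hindep.indepFun hne).measure_inter_preimage_eq_mul
        {x} {x} (measurableSet_singleton x) (measurableSet_singleton x)
      have hW : ∀ b : Option (Fin n × Fin m), μ (W b ⁻¹' {x}) = ν {x} := by
        intro b
        rw [← hlaw b, Measure.map_apply (hmeas b) (measurableSet_singleton x)]
      have hsub : W none ⁻¹' {x} ∩ W (some (i0, j0)) ⁻¹' {x}
          ⊆ {ω | W none ω = W (some (i0, j0)) ω} := by
        rintro ω ⟨h1, h2⟩
        simp only [mem_preimage, mem_singleton_iff] at h1 h2
        simp [mem_setOf_eq, h1, h2]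
      have hzero : μ (W none ⁻¹' {x} ∩ W (some (i0, j0)) ⁻¹' {x}) = 0 :=
        measure_mono_null hsub (hdist none (some (i0, j0)) hne)
      rw [hpair, hW none, hW (some (i0, j0))] at hzero
      exact or_self_iff.1 (mul_eq_zero.1 hzero)
    have hAq : ν A = ENNReal.ofReal q := by
      rw [hA]; exact measure_F_lt_eq ν hatom hqs1.1 hqs1.2
    have haq' : a = q := by
      rw [haa, hAq, ENNReal.toReal_ofReal hq01.1]
    have hPβ : (μ (X ⁻¹' B)).toReal = β := by
      rw [hPtoReal, haq', hqs2, hts2]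
    rw [hset, hcompl]
    rw [ENNReal.toReal_sub_of_le prob_le_one ENNReal.one_ne_top, ENNReal.toReal_one, hPβ]
end

section
/- For α, β ∈ (0,1) and positive integers n, m, the maximum over (ℓ,k) ∈ {1,…,n}×{1,…,m} of the β-quantile F_{U_(ℓ:n,k:m)}⁻¹(β) equals β^{1/(mn)}. Consequently, there exists (ℓ,k) with F_{U_(ℓ:n,k:m)}⁻¹(β) ≥ 1−α if and only if mn ≥ log(β)/log(1−α). -/
open MeasureTheory ProbabilityTheory Set

/-! ### Auxiliary lemmas -/

lemma sorted_get_le_iff (t : ℝ) : ∀ (L : List ℝ), L.Pairwise (· ≤ ·) → ∀ (j : ℕ) (hj : j < L.length),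
    (L.get ⟨j, hj⟩ ≤ t ↔ j < L.countP (fun x => decide (x ≤ t))) := by
  intro L hL
  induction L with
  | nil => intro j hj; simp at hj
  | cons a L ih =>
    rw [List.pairwise_cons] at hL
    obtain ⟨ha, hL'⟩ := hL
    intro j hj
    cases j with
    | zero =>
      simp only [List.get, List.countP_cons]
      by_cases h : a ≤ t
      · simp [h]
      · constructor
        · intro h'; exact absurd h' h
        · intro h'
          exfalso
          have : L.countP (fun x => decide (x ≤ t)) = 0 := by
            rw [List.countP_eq_zero]
            intro x hx
            simp only [decide_eq_true_eq]
            intro hxt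
            exact h (le_trans (ha x hx) hxt)
          simp [this, h] at h'
    | succ j =>
      have hj' : j < L.length := by simpa using hj
      have := ih hL' j hj'
      simp only [List.get, List.countP_cons]
      by_cases h : a ≤ t
      · simp only [h, decide_true, if_pos]
        constructor
        · intro h'; have := this.mp h'; omega
        · intro h'; apply this.mpr; omega
      · have hzero : L.countP (fun x => decide (x ≤ t)) = 0 := by
          rw [List.countP_eq_zero]
          intro x hx
          simp only [decide_eq_true_eq]
          intro hxt
          exact h (le_trans (ha x hx) hxt)
        constructor
        · intro h'
          exfalso
          exact h (le_trans (ha _ (L.get_mem _)) h')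
        · intro h'; simp [hzero, h] at h'

lemma length_sortList {N : ℕ} (u : Fin N → ℝ) :
    ((Multiset.ofList (List.ofFn u)).sort (· ≤ ·)).length = N := by
  rw [Multiset.length_sort]; simp

lemma card_filter_eq_countP {N : ℕ} (p : Fin N → Prop) [DecidablePred p] :
    (Finset.univ.filter p).card = List.countP (fun i => decide (p i)) (List.finRange N) := by
  classical
  rw [Finset.card, Finset.filter_val, ← Multiset.countP_eq_card_filter, Fin.univ_def]
  rfl

lemma orderStat_le_iff {N : ℕ} (u : Fin N → ℝ) {r : ℕ} (hr1 : 1 ≤ r) (hrN : r ≤ N) (t : ℝ) :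
    orderStat u r ≤ t ↔ r ≤ (Finset.univ.filter (fun i => u i ≤ t)).card := by
  set L := ((Multiset.ofList (List.ofFn u)).sort (· ≤ ·)) with hLdef
  have hlen : L.length = N := length_sortList u
  have hj : r - 1 < L.length := by omega
  have hsorted : L.Pairwise (· ≤ ·) := Multiset.pairwise_sort _ _
  have hget : orderStat u r = L.get ⟨r - 1, hj⟩ := by
    rw [orderStat, List.getD_eq_getElem]; rfl
  rw [hget, sorted_get_le_iff t L hsorted (r-1) hj]
  have perm : L.Perm (List.ofFn u) := by
    rw [← Multiset.coe_eq_coe, hLdef, Multiset.sort_eq]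
  rw [perm.countP_eq]
  have hcount : (List.ofFn u).countP (fun x => decide (x ≤ t))
      = (Finset.univ.filter (fun i => u i ≤ t)).card := by
    rw [List.ofFn_eq_map, List.countP_map, card_filter_eq_countP]
    rfl
  omega

lemma orderStat_mem {N : ℕ} (u : Fin N → ℝ) {r : ℕ} (hr1 : 1 ≤ r) (hrN : r ≤ N) :
    ∃ i, u i = orderStat u r := by
  set L := ((Multiset.ofList (List.ofFn u)).sort (· ≤ ·)) with hLdef
  have hlen : L.length = N := length_sortList u
  have hj : r - 1 < L.length := by omega
  have hget : orderStat u r = L.get ⟨r - 1, hj⟩ := by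
    rw [orderStat, List.getD_eq_getElem]; rfl
  have hmem : orderStat u r ∈ L := by rw [hget]; exact L.get_mem _
  have hmem2 : orderStat u r ∈ List.ofFn u := by
    have := (Multiset.mem_sort (· ≤ ·)).mp (hLdef ▸ hmem)
    simpa using this
  simpa [List.mem_ofFn, Set.mem_range, eq_comm] using hmem2

lemma measurable_orderStat {N r : ℕ} (hr1 : 1 ≤ r) (hrN : r ≤ N) :
    Measurable (fun u : Fin N → ℝ => orderStat u r) := by
  apply measurable_of_Iic
  intro t
  have hset : (fun u : Fin N → ℝ => orderStat u r) ⁻¹' Iic t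
      = {u | r ≤ (Finset.univ.filter (fun i => u i ≤ t)).card} := by
    ext u
    simp only [mem_preimage, mem_Iic, mem_setOf_eq]
    exact orderStat_le_iff u hr1 hrN t
  rw [hset]
  have hc : Measurable (fun u : Fin N → ℝ => (Finset.univ.filter (fun i => u i ≤ t)).card) := by
    simp_rw [Finset.card_filter]
    apply Finset.measurable_sum
    intro i _
    exact Measurable.ite ((measurable_pi_apply i) measurableSet_Iic) measurable_const
      measurable_const
  exact hc measurableSet_Ici

instance unifPi_prob (N : ℕ) : IsProbabilityMeasure (unifPi N) := by
  have : IsProbabilityMeasure (volume.restrict (Icc (0:ℝ) 1)) := by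
    constructor
    rw [Measure.restrict_apply MeasurableSet.univ]
    simp [Real.volume_Icc]
  unfold unifPi
  infer_instance

lemma betaOS_Iic (N r : ℕ) (hr1 : 1 ≤ r) (hrN : r ≤ N) (t : ℝ) :
    betaOS N r (Iic t) = unifPi N {u | orderStat u r ≤ t} := by
  rw [betaOS, Measure.map_apply (measurable_orderStat hr1 hrN) measurableSet_Iic]
  rfl

lemma betaCDF_nonneg (N r : ℕ) (t : ℝ) : 0 ≤ betaCDF N r t := ENNReal.toReal_nonneg

lemma betaCDF_le_one (N r : ℕ) (hr1 : 1 ≤ r) (hrN : r ≤ N) (t : ℝ) : betaCDF N r t ≤ 1 := by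
  rw [betaCDF, betaOS_Iic N r hr1 hrN]
  have h : unifPi N {u | orderStat u r ≤ t} ≤ 1 := prob_le_one
  calc (unifPi N {u | orderStat u r ≤ t}).toReal ≤ (1 : ENNReal).toReal :=
        ENNReal.toReal_mono (by simp) h
    _ = 1 := by simp

lemma orderStat_max_le_iff {N : ℕ} (hN : 1 ≤ N) (u : Fin N → ℝ) (t : ℝ) :
    orderStat u N ≤ t ↔ ∀ i, u i ≤ t := by
  rw [orderStat_le_iff u hN le_rfl t]
  constructor
  · intro h i
    have hcard : (Finset.univ.filter (fun i => u i ≤ t)).card = Fintype.card (Fin N) := by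
      have := Finset.card_filter_le Finset.univ (fun i => u i ≤ t)
      simp only [Finset.card_univ, Fintype.card_fin] at this ⊢
      omega
    have heq := Finset.eq_univ_of_card _ hcard
    have hi := Finset.mem_univ i
    rw [← heq] at hi
    exact (Finset.mem_filter.mp hi).2
  · intro h
    have : Finset.univ.filter (fun i => u i ≤ t) = Finset.univ :=
      Finset.filter_true_of_mem (fun i _ => h i)
    simp [this]

lemma betaCDF_NN {N : ℕ} (hN : 1 ≤ N) {t : ℝ} (ht0 : 0 ≤ t) (ht1 : t ≤ 1) :
    betaCDF N N t = t ^ N := by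
  rw [betaCDF, betaOS_Iic N N hN le_rfl]
  have h1 : {u : Fin N → ℝ | orderStat u N ≤ t} = Set.pi Set.univ (fun _ => Iic t) := by
    ext u
    simp only [mem_setOf_eq, Set.mem_pi, Set.mem_univ, forall_true_left, mem_Iic]
    exact orderStat_max_le_iff hN u t
  rw [h1, unifPi, Measure.pi_pi]
  have h2 : volume.restrict (Icc (0:ℝ) 1) (Iic t) = ENNReal.ofReal t := by
    rw [Measure.restrict_apply measurableSet_Iic]
    have : Iic t ∩ Icc (0:ℝ) 1 = Icc 0 t := by
      ext x
      simp only [mem_inter_iff, mem_Iic, mem_Icc]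
      constructor
      · rintro ⟨h1, h2, h3⟩; exact ⟨h2, h1⟩
      · rintro ⟨h1, h2⟩; exact ⟨h2, h1, le_trans h2 ht1⟩
    rw [this, Real.volume_Icc]
    simp
  simp only [h2, Finset.prod_const, Finset.card_univ, Fintype.card_fin]
  rw [← ENNReal.ofReal_pow ht0, ENNReal.toReal_ofReal (pow_nonneg ht0 N)]

lemma betaCDF_neg (N r : ℕ) (hr1 : 1 ≤ r) (hrN : r ≤ N) {t : ℝ} (ht : t < 0) :
    betaCDF N r t = 0 := by
  rw [betaCDF, betaOS_Iic N r hr1 hrN]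
  have hnull : unifPi N {u : Fin N → ℝ | orderStat u r ≤ t} = 0 := by
    apply measure_mono_null (t := (Set.pi Set.univ (fun _ : Fin N => Ici (0:ℝ)))ᶜ)
    · intro u hu hbox
      obtain ⟨i, hi⟩ := orderStat_mem u hr1 hrN
      have h0 : 0 ≤ u i := hbox i (Set.mem_univ i)
      have : (0:ℝ) ≤ orderStat u r := hi ▸ h0
      exact absurd (le_trans this hu) (not_le.mpr ht)
    · rw [measure_compl (MeasurableSet.univ_pi fun _ => measurableSet_Ici) (measure_ne_top _ _)]
      have : unifPi N (Set.pi Set.univ (fun _ : Fin N => Ici (0:ℝ))) = 1 := by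
        rw [unifPi, Measure.pi_pi]
        have : volume.restrict (Icc (0:ℝ) 1) (Ici 0) = 1 := by
          rw [Measure.restrict_apply measurableSet_Ici]
          have : Ici (0:ℝ) ∩ Icc 0 1 = Icc 0 1 := by
            ext x; simp only [mem_inter_iff, mem_Ici, mem_Icc]; tauto
          rw [this, Real.volume_Icc]; simp
        simp [this]
      rw [this]
      simp
  rw [hnull]
  simp

lemma betaCDF_N_le (N r : ℕ) (hr1 : 1 ≤ r) (hrN : r ≤ N) (t : ℝ) :
    betaCDF N N t ≤ betaCDF N r t := by
  have hN : 1 ≤ N := le_trans hr1 hrN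
  rw [betaCDF, betaCDF, betaOS_Iic N r hr1 hrN, betaOS_Iic N N hN le_rfl]
  apply ENNReal.toReal_mono (measure_ne_top _ _)
  apply measure_mono
  intro u hu
  simp only [mem_setOf_eq] at hu ⊢
  have h2 := (orderStat_le_iff u hN le_rfl (orderStat u N)).mp le_rfl
  exact le_trans ((orderStat_le_iff u hr1 hrN _).mpr (le_trans hrN h2)) hu

lemma betaCDF_one (N r : ℕ) (hr1 : 1 ≤ r) (hrN : r ≤ N) : betaCDF N r 1 = 1 := by
  have hN : 1 ≤ N := le_trans hr1 hrN
  have h1 : betaCDF N N 1 = 1 := by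
    rw [betaCDF_NN hN (by norm_num) le_rfl]; simp
  have := betaCDF_N_le N r hr1 hrN 1
  have := betaCDF_le_one N r hr1 hrN 1
  linarith

lemma betaCDF_mono (N r : ℕ) (hr1 : 1 ≤ r) (hrN : r ≤ N) : Monotone (betaCDF N r) := by
  intro s t hst
  rw [betaCDF, betaCDF, betaOS_Iic N r hr1 hrN, betaOS_Iic N r hr1 hrN]
  exact ENNReal.toReal_mono (measure_ne_top _ _)
    (measure_mono (fun u hu => le_trans hu hst))

/-- For `p ∈ (0,1]`, the quantile of the max order statistic is `p^{1/N}`. -/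
lemma betaQuantile_NN {N : ℕ} (hN : 1 ≤ N) {p : ℝ} (hp0 : 0 < p) (hp1 : p ≤ 1) :
    betaQuantile N N p = p ^ ((N : ℝ)⁻¹) := by
  set c := p ^ ((N : ℝ)⁻¹) with hc
  have hNne : (N : ℝ) ≠ 0 := by positivity
  have hc0 : 0 < c := Real.rpow_pos_of_pos hp0 _
  have hc1 : c ≤ 1 := Real.rpow_le_one (le_of_lt hp0) hp1 (by positivity)
  have hcN : c ^ N = p := by
    rw [hc, ← Real.rpow_natCast (p ^ ((N:ℝ)⁻¹)) N, ← Real.rpow_mul (le_of_lt hp0)]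
    rw [inv_mul_cancel₀ hNne, Real.rpow_one]
  have hset : {x | p ≤ betaCDF N N x} = Ici c := by
    ext x
    simp only [mem_setOf_eq, mem_Ici]
    constructor
    · intro hx
      by_contra hxc
      push_neg at hxc
      rcases lt_or_ge x 0 with hx0 | hx0
      · rw [betaCDF_neg N N hN le_rfl hx0] at hx; linarith
      · have hx1 : x ≤ 1 := le_trans (le_of_lt hxc) hc1
        rw [betaCDF_NN hN hx0 hx1] at hx
        have : x ^ N < c ^ N := pow_lt_pow_left₀ hxc hx0 (by omega)
        rw [hcN] at this; linarith
    · intro hcx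
      rcases le_or_gt x 1 with hx1 | hx1
      · rw [betaCDF_NN hN (le_trans (le_of_lt hc0) hcx) hx1]
        calc p = c ^ N := hcN.symm
          _ ≤ x ^ N := pow_le_pow_left₀ (le_of_lt hc0) hcx N
      · calc p ≤ 1 := hp1
          _ = betaCDF N N 1 := (betaCDF_one N N hN le_rfl).symm
          _ ≤ betaCDF N N x := betaCDF_mono N N hN le_rfl (le_of_lt hx1)
  rw [betaQuantile, genInv, hset, csInf_Ici]

lemma betaQuantile_le_NN (N r : ℕ) (hr1 : 1 ≤ r) (hrN : r ≤ N) {p : ℝ}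
    (hp0 : 0 < p) (hp1 : p ≤ 1) :
    betaQuantile N r p ≤ betaQuantile N N p := by
  have hN : 1 ≤ N := le_trans hr1 hrN
  apply csInf_le_csInf
  · refine ⟨0, fun x hx => ?_⟩
    by_contra hx0
    push_neg at hx0
    rw [mem_setOf_eq, betaCDF_neg N r hr1 hrN hx0] at hx
    linarith
  · exact ⟨1, by rw [mem_setOf_eq, betaCDF_one N N hN le_rfl]; exact hp1⟩
  · intro x hx
    rw [mem_setOf_eq] at hx ⊢
    exact le_trans hx (betaCDF_N_le N r hr1 hrN x)

lemma betaQuantile_mono (N r : ℕ) (hr1 : 1 ≤ r) (hrN : r ≤ N) {p q : ℝ}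
    (hp0 : 0 < p) (hpq : p ≤ q) (hq1 : q ≤ 1) :
    betaQuantile N r p ≤ betaQuantile N r q := by
  apply csInf_le_csInf
  · refine ⟨0, fun x hx => ?_⟩
    by_contra hx0
    push_neg at hx0
    rw [mem_setOf_eq, betaCDF_neg N r hr1 hrN hx0] at hx
    linarith
  · exact ⟨1, by rw [mem_setOf_eq, betaCDF_one N r hr1 hrN]; exact hq1⟩
  · intro x hx
    rw [mem_setOf_eq] at hx ⊢
    linarith

lemma betaQuantile_nonpos (N r : ℕ) {p : ℝ} (hp : p ≤ 0) : betaQuantile N r p = 0 := by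
  have : {x | p ≤ betaCDF N r x} = univ := by
    ext x
    simp only [mem_setOf_eq, mem_univ, iff_true]
    exact le_trans hp (betaCDF_nonneg N r x)
  rw [betaQuantile, genInv, this]
  exact Real.sInf_of_not_bddBelow (by simpa using not_bddBelow_univ (α := ℝ))

/-- The maximum over `(ℓ,k) ∈ {1,…,n}×{1,…,m}` of the `β`-quantile
`F_{U_(ℓ:n,k:m)}⁻¹(β) = F_{U_(ℓ:n)}⁻¹(F_{U_(k:m)}⁻¹(β))` equals `β^{1/(mn)}`;
consequently there is `(ℓ,k)` with `F_{U_(ℓ:n,k:m)}⁻¹(β) ≥ 1-α` iff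
`mn ≥ log β / log(1-α)`. -/
theorem qq_quantile_max (n m : ℕ) (hn : 1 ≤ n) (hm : 1 ≤ m)
    (α β : ℝ) (hα : α ∈ Ioo (0:ℝ) 1) (hβ : β ∈ Ioo (0:ℝ) 1) :
    (∀ ℓ k, 1 ≤ ℓ → ℓ ≤ n → 1 ≤ k → k ≤ m →
      betaQuantile n ℓ (betaQuantile m k β) ≤ β ^ (((m : ℝ) * n)⁻¹))
    ∧ betaQuantile n n (betaQuantile m m β) = β ^ (((m : ℝ) * n)⁻¹)
    ∧ ((∃ ℓ k, 1 ≤ ℓ ∧ ℓ ≤ n ∧ 1 ≤ k ∧ k ≤ m ∧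
          1 - α ≤ betaQuantile n ℓ (betaQuantile m k β))
        ↔ Real.log β / Real.log (1 - α) ≤ (m : ℝ) * n) := by
  obtain ⟨hα0, hα1⟩ := hα
  obtain ⟨hβ0, hβ1⟩ := hβ
  set q := β ^ ((m : ℝ)⁻¹) with hq
  have hq0 : 0 < q := Real.rpow_pos_of_pos hβ0 _
  have hq1 : q ≤ 1 := Real.rpow_le_one (le_of_lt hβ0) (le_of_lt hβ1) (by positivity)
  have hqmm : betaQuantile m m β = q := betaQuantile_NN hm hβ0 (le_of_lt hβ1)
  have hcomp : (q : ℝ) ^ ((n : ℝ)⁻¹) = β ^ (((m : ℝ) * n)⁻¹) := by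
    rw [hq, ← Real.rpow_mul (le_of_lt hβ0), ← mul_inv]
  have hpart2 : betaQuantile n n (betaQuantile m m β) = β ^ (((m : ℝ) * n)⁻¹) := by
    rw [hqmm, betaQuantile_NN hn hq0 hq1, hcomp]
  have hpart1 : ∀ ℓ k, 1 ≤ ℓ → ℓ ≤ n → 1 ≤ k → k ≤ m →
      betaQuantile n ℓ (betaQuantile m k β) ≤ β ^ (((m : ℝ) * n)⁻¹) := by
    intro ℓ k hℓ1 hℓn hk1 hkm
    set p := betaQuantile m k β with hp
    rcases le_or_gt p 0 with hp0 | hp0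
    · rw [betaQuantile_nonpos n ℓ hp0]
      positivity
    · have hpq : p ≤ q := by
        rw [← hqmm]
        exact betaQuantile_le_NN m k hk1 hkm hβ0 (le_of_lt hβ1)
      calc betaQuantile n ℓ p ≤ betaQuantile n ℓ q :=
            betaQuantile_mono n ℓ hℓ1 hℓn hp0 hpq hq1
        _ ≤ betaQuantile n n q := betaQuantile_le_NN n ℓ hℓ1 hℓn hq0 hq1
        _ = q ^ ((n : ℝ)⁻¹) := betaQuantile_NN hn hq0 hq1
        _ = β ^ (((m : ℝ) * n)⁻¹) := hcomp
  refine ⟨hpart1, hpart2, ?_⟩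
  have hmn0 : (0 : ℝ) < (m : ℝ) * n := by positivity
  have h1α0 : (0 : ℝ) < 1 - α := by linarith
  have hloga : Real.log (1 - α) < 0 := Real.log_neg h1α0 (by linarith)
  have hkey : 1 - α ≤ β ^ (((m : ℝ) * n)⁻¹) ↔
      Real.log β / Real.log (1 - α) ≤ (m : ℝ) * n := by
    have hβc0 : (0 : ℝ) < β ^ (((m : ℝ) * n)⁻¹) := Real.rpow_pos_of_pos hβ0 _
    rw [← Real.log_le_log_iff h1α0 hβc0, Real.log_rpow hβ0]
    rw [div_le_iff_of_neg hloga]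
    constructor
    · intro h
      calc ((m : ℝ) * n) * Real.log (1 - α) ≤ ((m : ℝ) * n) * ((((m : ℝ) * n)⁻¹) * Real.log β) := by
            apply mul_le_mul_of_nonneg_left h (le_of_lt hmn0)
        _ = Real.log β := by field_simp
    · intro h
      calc Real.log (1 - α) = (((m : ℝ) * n)⁻¹) * (((m : ℝ) * n) * Real.log (1 - α)) := by
            field_simp
        _ ≤ (((m : ℝ) * n)⁻¹) * Real.log β := by
            apply mul_le_mul_of_nonneg_left h (by positivity)
        _ = ((((m : ℝ) * n)⁻¹) * Real.log β) := rfl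
  constructor
  · rintro ⟨ℓ, k, hℓ1, hℓn, hk1, hkm, hle⟩
    exact hkey.mp (le_trans hle (hpart1 ℓ k hℓ1 hℓn hk1 hkm))
  · intro h
    exact ⟨n, m, hn, le_rfl, hm, le_rfl, by rw [hpart2]; exact hkey.mpr h⟩
end
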